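/- arXiv:2110.14858 — 12 statements merged into one kernel-verified Lean document; each statement's English description precedes it below -/
import Mathlib

section
/- Let Σ = {a_1, a_2, …, a_s} be a finite alphabet and let w ∈ Σ*. Then the sum over all permutations σ of {1,…,s} of the number of occurrences of a_{σ(1)}a_{σ(2)}⋯a_{σ(s)} as a scattered subword of w equals the product ∏_{i=1}^{s} |w|_{a_i}. -/
/-- The number of occurrences of `v` as a scattered subword (subsequence) of `w`:
the number of strictly increasing sequences of positions in `w` spelling out `v`. -/
def subwordCount {α : Type*} [DecidableEq α] (w v : List α) : ℕ :=
  w.sublists.count v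

/-- The conjugacy class (circular word) `[w]` of `w`: the set of all cyclic shifts of `w`. -/
def conjClass {α : Type*} [DecidableEq α] (w : List α) : Finset (List α) :=
  insert w ((Finset.range w.length).image w.rotate)

/-- The average subword count of `v` in the circular word `[w]`:
`|[w]|_v = (1/|[w]|) ∑_{u ∈ [w]} |u|_v`. -/
def circCount {α : Type*} [DecidableEq α] (w v : List α) : ℚ :=
  (∑ u ∈ conjClass w, (subwordCount u v : ℚ)) / ((conjClass w).card : ℚ)

/-- The Parikh matrix of the letter `q` of the ordered alphabet `Fin s`:
the identity matrix with an extra `1` in entry `(q, q+1)`. -/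
def parikhLetter {s : ℕ} (q : Fin s) : Matrix (Fin (s + 1)) (Fin (s + 1)) ℚ :=
  1 + Matrix.single q.castSucc q.succ 1

/-- The Parikh matrix mapping over the ordered alphabet `Fin s` (a monoid morphism). -/
def parikhMatrix {s : ℕ} (w : List (Fin s)) : Matrix (Fin (s + 1)) (Fin (s + 1)) ℚ :=
  (w.map parikhLetter).prod

/-- The Parikh matrix of the circular word `[w]`:
`Ψ([w]) = (1/|[w]|) ∑_{u ∈ [w]} Ψ(u)`. -/
def circParikh {s : ℕ} (w : List (Fin s)) : Matrix (Fin (s + 1)) (Fin (s + 1)) ℚ :=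
  (((conjClass w).card : ℚ))⁻¹ • ∑ u ∈ conjClass w, parikhMatrix u

/-- The alternate matrix: `(i,j)` entry is `(-1)^(i+j)` times the `(i,j)` entry of `A`. -/
def altMatrix {n : ℕ} (A : Matrix (Fin n) (Fin n) ℚ) : Matrix (Fin n) (Fin n) ℚ :=
  Matrix.of fun i j => (-1 : ℚ) ^ (i.val + j.val) * A i j

/-- The word `a_i a_{i+1} ⋯ a_j` over the ordered alphabet `Fin s`. -/
def segWord {s : ℕ} (i j : Fin s) : List (Fin s) :=
  (List.range (j.val - i.val + 1)).attach.map fun t =>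
    ⟨i.val + t.1, by
      have ht := List.mem_range.mp t.2
      have hi := i.isLt
      have hj := j.isLt
      omega⟩



section Aux

variable {α : Type*} [DecidableEq α]


def extX (a : α) (w : List α) : List α → ℕ
  | [] => 0
  | b :: t => if b = a then subwordCount w t else 0

lemma subwordCount_nil (v : List α) :
    subwordCount ([] : List α) v = if v = [] then 1 else 0 := by
  by_cases h : v = [] <;> simp [subwordCount, h, List.count_cons]

lemma subwordCount_cons (a : α) (w v : List α) :
    subwordCount (a :: w) v = subwordCount w v + extX a w v := by
  unfold subwordCount
  have h1 : List.count v (a :: w).sublists = List.count v (a :: w).sublists' := by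
    show List.countP _ _ = List.countP _ _
    exact (List.sublists_perm_sublists' (a :: w)).countP_eq _
  have h2 : List.count v w.sublists = List.count v w.sublists' := by
    show List.countP _ _ = List.countP _ _
    exact (List.sublists_perm_sublists' w).countP_eq _
  rw [h1, h2, List.sublists'_cons, List.count_append]
  congr 1
  cases v with
  | nil =>
    simp only [extX]
    rw [List.count_eq_zero]
    simp
  | cons b t =>
    simp only [extX]
    by_cases hb : b = a
    · subst hb
      rw [if_pos rfl]
      have h3 : subwordCount w t = List.countP (fun x => x == t) w.sublists' :=
        (List.sublists_perm_sublists' w).countP_eq _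
      rw [h3]
      show List.countP _ _ = _
      rw [List.countP_map]
      apply List.countP_congr
      intro x hx
      simp
    · rw [if_neg hb]
      show List.countP _ _ = 0
      rw [List.countP_eq_zero]
      intro x hx
      obtain ⟨y, -, hy⟩ := List.mem_map.mp hx
      subst hy
      simp only [beq_iff_eq]
      intro h
      exact hb (by injection h.symm)

lemma subwordCount_nil_right (w : List α) : subwordCount w [] = 1 := by
  induction w with
  | nil => simp [subwordCount_nil]
  | cons a w ih => rw [subwordCount_cons]; simp [extX, ih]

lemma subwordCount_single_cons (a b : α) (w : List α) :
    subwordCount (a :: w) [b] = subwordCount w [b] + if b = a then 1 else 0 := by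
  rw [subwordCount_cons]
  simp [extX, subwordCount_nil_right]

lemma prod_add_indicator (g : α → ℕ) (a : α) :
    ∀ l : List α, l.Nodup →
      (l.map fun x => g x + if x = a then 1 else 0).prod =
        (l.map g).prod + (if a ∈ l then ((l.erase a).map g).prod else 0) := by
  intro l hl
  induction l with
  | nil => simp
  | cons b l ih =>
    obtain ⟨hb, hl'⟩ := List.nodup_cons.mp hl
    by_cases hba : b = a
    · have hmap : (l.map fun x => g x + if x = a then 1 else 0) = l.map g := by
        apply List.map_congr_left
        intro x hx
        have hxa : x ≠ a := fun h => hb (by rw [hba, ← h]; exact hx)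
        simp [hxa]
      rw [List.map_cons, List.prod_cons, hmap, List.map_cons, List.prod_cons,
        if_pos hba, if_pos (by simp [hba]), hba, List.erase_cons_head]
      ring
    · rw [List.map_cons, List.prod_cons, ih hl', List.map_cons, List.prod_cons,
        if_neg hba]
      have herase : (b :: l).erase a = b :: l.erase a :=
        List.erase_cons_tail (by simp [hba])
      by_cases ha : a ∈ l
      · rw [if_pos ha, if_pos (by simp [ha]), herase, List.map_cons, List.prod_cons]
        ring
      · rw [if_neg ha, if_neg (by simp [ha, Ne.symm hba])]
        simp

end Aux

section Key

variable {α : Type*} [DecidableEq α]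

lemma ext_sum (w' : List α) (a : α) (l : List α) (hl : l.Nodup) :
    ∑ p ∈ l.permutations.toFinset, extX a w' p =
      if a ∈ l then ∑ q ∈ ((l.erase a).permutations.toFinset), subwordCount w' q
      else 0 := by
  by_cases ha : a ∈ l
  · rw [if_pos ha]
    rw [← Finset.sum_filter_of_ne (p := fun p => p.head? = some a)
      (fun p hp hne => ?_)]
    · refine Finset.sum_bij' (fun p _ => p.tail) (fun q _ => a :: q) ?_ ?_ ?_ ?_ ?_
      · intro p hp
        simp only [Finset.mem_filter, List.mem_toFinset, List.mem_permutations] at hp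
        obtain ⟨hperm, hhead⟩ := hp
        have hcons : a :: p.tail = p := List.cons_head?_tail (by simp [hhead])
        have : List.Perm (a :: p.tail) (a :: l.erase a) := by
          rw [hcons]; exact hperm.trans (List.perm_cons_erase ha)
        simp only [List.mem_toFinset, List.mem_permutations]
        exact this.cons_inv
      · intro q hq
        simp only [List.mem_toFinset, List.mem_permutations] at hq
        simp only [Finset.mem_filter, List.mem_toFinset, List.mem_permutations]
        exact ⟨(hq.cons a).trans (List.perm_cons_erase ha).symm, rfl⟩
      · intro p hp
        simp only [Finset.mem_filter, List.mem_toFinset, List.mem_permutations] at hp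
        exact List.cons_head?_tail (by simp [hp.2])
      · intro q hq
        rfl
      · intro p hp
        simp only [Finset.mem_filter, List.mem_toFinset, List.mem_permutations] at hp
        have hcons : a :: p.tail = p := List.cons_head?_tail (by simp [hp.2])
        conv_lhs => rw [← hcons]
        simp [extX]
    · -- nonzero implies head = a
      cases p with
      | nil => simp [extX] at hne
      | cons b t =>
        simp only [extX] at hne
        by_cases hba : b = a
        · simp [hba]
        · simp [hba] at hne
  · rw [if_neg ha]
    apply Finset.sum_eq_zero
    intro p hp
    simp only [List.mem_toFinset, List.mem_permutations] at hp
    cases p with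
    | nil => simp [extX]
    | cons b t =>
      have hb : b ∈ l := hp.mem_iff.mp (by simp)
      have : b ≠ a := fun h => ha (h ▸ hb)
      simp [extX, this]

lemma key_lemma (w : List α) : ∀ l : List α, l.Nodup →
    ∑ p ∈ l.permutations.toFinset, subwordCount w p =
      (l.map fun x => subwordCount w [x]).prod := by
  induction w with
  | nil =>
    intro l _
    cases l with
    | nil => simp [subwordCount_nil]
    | cons b l' =>
      rw [Finset.sum_eq_zero, List.map_cons, List.prod_cons]
      · have : subwordCount ([] : List α) [b] = 0 := by simp [subwordCount_nil]
        simp [this]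
      · intro p hp
        simp only [List.mem_toFinset, List.mem_permutations] at hp
        have : p ≠ [] := by intro h; rw [h] at hp; simp at hp
        rw [subwordCount_nil, if_neg this]
  | cons a w' ih =>
    intro l hl
    have step : ∀ p ∈ l.permutations.toFinset,
        subwordCount (a :: w') p = subwordCount w' p + extX a w' p :=
      fun p _ => subwordCount_cons a w' p
    rw [Finset.sum_congr rfl step, Finset.sum_add_distrib, ih l hl,
      ext_sum w' a l hl]
    have hmap : (l.map fun x => subwordCount (a :: w') [x]) =
        l.map fun x => subwordCount w' [x] + if x = a then 1 else 0 := by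
      apply List.map_congr_left
      intro x _
      exact subwordCount_single_cons a x w'
    rw [hmap, prod_add_indicator _ a l hl]
    congr 1
    by_cases ha : a ∈ l
    · rw [if_pos ha, if_pos ha, ih (l.erase a) (hl.erase a)]
    · simp [ha]

end Key

lemma perm_finRange_exists {s : ℕ} (p : List (Fin s)) (hp : List.Perm p (List.finRange s)) :
    ∃ σ : Equiv.Perm (Fin s), List.ofFn (fun k => σ k) = p := by
  have hlen : p.length = s := by
    rw [hp.length_eq, List.length_finRange]
  have hnodup : p.Nodup := (hp.nodup_iff).mpr (List.nodup_finRange s)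
  set f : Fin s → Fin s := fun i => p.get (Fin.cast hlen.symm i) with hf
  have hinj : Function.Injective f := by
    intro i j hij
    have := List.nodup_iff_injective_get.mp hnodup hij
    simpa [Fin.ext_iff] using this
  have hbij : Function.Bijective f := Finite.injective_iff_bijective.mp hinj
  refine ⟨Equiv.ofBijective f hbij, ?_⟩
  apply List.ext_get
  · simp [hlen]
  · intro n h1 h2
    simp only [List.get_ofFn]
    rfl

/-- Proposition 1 (combinatorial property of words): for a word `w` over the alphabet
`{a_1, …, a_s} = Fin s`, the sum over all permutations `σ` of the number of occurrences
of `a_{σ(1)} ⋯ a_{σ(s)}` as a scattered subword of `w` equals `∏ i, |w|_{a_i}`. -/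
theorem stmt_0 (s : ℕ) (w : List (Fin s)) :
    ∑ σ : Equiv.Perm (Fin s), subwordCount w (List.ofFn fun k => σ k) =
      ∏ i : Fin s, subwordCount w [i] := by
  classical
  have key := key_lemma w (List.finRange s) (List.nodup_finRange s)
  rw [Fin.prod_univ_def]
  rw [← key]
  refine Finset.sum_bij (fun σ _ => List.ofFn fun k => σ k) ?_ ?_ ?_ ?_
  · intro σ _
    simp only [List.mem_toFinset, List.mem_permutations]
    apply List.perm_of_nodup_nodup_toFinset_eq
    · rw [List.ofFn_eq_map]
      exact (List.nodup_finRange s).map σ.injective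
    · exact List.nodup_finRange s
    · apply Finset.eq_of_subset_of_card_le
      · intro x _
        simp
      · rw [List.toFinset_card_of_nodup (List.nodup_finRange s),
          List.toFinset_card_of_nodup]
        · simp
        · rw [List.ofFn_eq_map]
          exact (List.nodup_finRange s).map σ.injective
  · intro σ _ τ _ h
    have := List.ofFn_injective h
    exact Equiv.ext fun x => congrFun this x
  · intro p hp
    simp only [List.mem_toFinset, List.mem_permutations] at hp
    obtain ⟨σ, hσ⟩ := perm_finRange_exists p hp
    exact ⟨σ, Finset.mem_univ σ, hσ⟩
  · intro σ _
    rfl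
end

section
/- Let Σ be an alphabet and v, w, w' ∈ Σ* with w' a cyclic shift of w (i.e., w and w' are conjugates). Then the sum of |w|_u over all conjugates u of v equals the sum of |w'|_u over all conjugates u of v; that is, the direct count of occurrences of v as a subword of the circular word [w] is independent of the chosen representative of [w]. -/
section Aux
variable {α : Type*} [DecidableEq α]

private lemma mem_conjClass {w u : List α} : u ∈ conjClass w ↔ w.IsRotated u := by
  unfold conjClass
  simp only [Finset.mem_insert, Finset.mem_image, Finset.mem_range]
  constructor
  · rintro (rfl | ⟨i, hi, rfl⟩)
    · exact ⟨0, by simp⟩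
    · exact ⟨i, rfl⟩
  · rintro ⟨n, rfl⟩
    rcases Nat.eq_zero_or_pos w.length with h0 | hp
    · left
      rw [List.eq_nil_of_length_eq_zero h0]
      simp
    · right
      exact ⟨n % w.length, Nat.mod_lt _ hp, List.rotate_mod w n⟩

private lemma sum_count_eq_countP (F : Finset (List α)) (L : List (List α)) :
    ∑ u ∈ F, L.count u = L.countP (· ∈ F) := by
  induction L with
  | nil => simp
  | cons a t ih =>
    simp only [List.count_cons, List.countP_cons, Finset.sum_add_distrib, ih]
    congr 1
    by_cases h : a ∈ F
    · rw [Finset.sum_eq_single a (by intro b _ hb; simp [hb.symm]) (by simp [h])]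
      simp [h]
    · rw [Finset.sum_eq_zero]
      · simp [h]
      · intro b hb
        have : a ≠ b := fun hab => h (hab ▸ hb)
        simp [this]

private lemma count_perm {l₁ l₂ : List (List α)} (h : l₁.Perm l₂) (u : List α) :
    l₁.count u = l₂.count u := by
  simp only [List.count]
  exact h.countP_eq _

private lemma step_sum (v : List α) (a : α) (x : List α) :
    ∑ u ∈ conjClass v, subwordCount (a :: x) u
      = ∑ u ∈ conjClass v, subwordCount (x ++ [a]) u := by
  have hL : ∀ u : List α, (a :: x).sublists.count u
      = x.sublists.count u + (x.sublists.map (a :: ·)).count u := by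
    intro u
    rw [count_perm (List.sublists_perm_sublists' (a :: x)), List.sublists'_cons,
      List.count_append, ← count_perm (List.sublists_perm_sublists' x),
      ← count_perm ((List.sublists_perm_sublists' x).map (a :: ·))]
  have hR : ∀ u : List α, (x ++ [a]).sublists.count u
      = x.sublists.count u + (x.sublists.map (· ++ [a])).count u := by
    intro u
    rw [List.sublists_concat, List.count_append]
  unfold subwordCount
  simp only [hL, hR, Finset.sum_add_distrib]
  congr 1
  rw [sum_count_eq_countP, sum_count_eq_countP, List.countP_map, List.countP_map]
  apply List.countP_congr
  intro t _
  simp only [Function.comp_apply, decide_eq_true_eq]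
  have hrot : (a :: t).IsRotated (t ++ [a]) := ⟨1, by simp [List.rotate_cons_succ]⟩
  rw [mem_conjClass, mem_conjClass]
  exact ⟨fun h => h.trans hrot, fun h => h.trans hrot.symm⟩

private lemma rotate_sum (v w : List α) (n : ℕ) :
    ∑ u ∈ conjClass v, subwordCount w u
      = ∑ u ∈ conjClass v, subwordCount (w.rotate n) u := by
  induction n with
  | zero => simp
  | succ n ih =>
    rw [ih]
    have hrr : w.rotate (n + 1) = (w.rotate n).rotate 1 := (List.rotate_rotate w n 1).symm
    rw [hrr]
    rcases hw : w.rotate n with _ | ⟨a, x⟩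
    · simp
    · have h1 : (a :: x).rotate 1 = x ++ [a] := by simp [List.rotate_cons_succ]
      rw [h1]
      exact step_sum v a x

end Aux

/-- The direct count of occurrences of `v` as a subword of the circular word `[w]`,
namely `∑_{u ∈ [v]} |w|_u`, does not depend on the chosen representative of `[w]`. -/
theorem stmt_1 {α : Type*} [DecidableEq α] (v w w' : List α)
    (h : w' ∈ conjClass w) :
    ∑ u ∈ conjClass v, subwordCount w u = ∑ u ∈ conjClass v, subwordCount w' u := by
  obtain ⟨n, rfl⟩ := mem_conjClass.mp h
  exact rotate_sum v w n
end

section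
/- Let Σ = {a_1, a_2, …, a_s} be a finite alphabet and [w] a circular word over Σ. Then the sum over all permutations σ of {1,…,s} of the average subword count |[w]|_{a_{σ(1)}a_{σ(2)}⋯a_{σ(s)}} equals the product ∏_{i=1}^{s} |[w]|_{a_i}. -/
section Aux

variable {α : Type*} [DecidableEq α]

lemma beq_inst_eq : (List.instBEq : BEq (List α)) = instBEqOfDecidableEq :=
  lawful_beq_subsingleton _ _

lemma subwordCount_eq_sublists' (w v : List α) :
    subwordCount w v = w.sublists'.count v := by
  unfold subwordCount
  rw [beq_inst_eq]
  rw [← beq_inst_eq]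
  exact (List.sublists_perm_sublists' w).count_eq v

lemma subwordCount_cons_cons (a b : α) (u t : List α) :
    subwordCount (a :: u) (b :: t)
      = subwordCount u (b :: t) + if b = a then subwordCount u t else 0 := by
  simp only [subwordCount_eq_sublists']
  rw [List.sublists'_cons, List.count_append]
  congr 1
  by_cases h : b = a
  · subst h
    rw [if_pos rfl, beq_inst_eq]
    rw [← beq_inst_eq]
    exact List.count_map_of_injective _ _ (List.cons_injective) t
  · rw [if_neg h]
    refine List.count_eq_zero.mpr ?_
    intro hmem
    obtain ⟨x, _, hx⟩ := List.mem_map.mp hmem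
    injection hx with h1 _
    exact h h1.symm

lemma subwordCount_singleton (w : List α) (b : α) :
    subwordCount w [b] = w.count b := by
  induction w with
  | nil => simp [subwordCount]
  | cons a u ih =>
    rw [subwordCount_cons_cons, ih, subwordCount_nil_right, List.count_cons]
    by_cases h : b = a
    · simp [h]
    · simp [h, Ne.symm h]

lemma prod_swap_succ {M : Type*} [CommMonoid M] {m : ℕ} (h : Fin (m + 1) → M)
    (p : Fin (m + 1)) :
    ∏ k, h k = h p * ∏ i : Fin m, h (Equiv.swap 0 p i.succ) := by
  rw [← Equiv.prod_comp (Equiv.swap 0 p) h, Fin.prod_univ_succ, Equiv.swap_apply_left]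

/-- Key combinatorial identity: for any word `u` and injective labelling `V`,
the total number of occurrences of all permutation words equals the product of
letter counts. -/
lemma key_sum_perm (u : List α) : ∀ (n : ℕ) (V : Fin n → α), Function.Injective V →
    ∑ σ : Equiv.Perm (Fin n), subwordCount u (List.ofFn fun k => V (σ k))
      = ∏ k, u.count (V k) := by
  induction u with
  | nil =>
    intro n V _
    cases n with
    | zero => simp [subwordCount]
    | succ m =>
      have hz : ∀ σ : Equiv.Perm (Fin (m + 1)),
          subwordCount [] (List.ofFn fun k => V (σ k)) = 0 := by
        intro σ
        simp only [subwordCount, List.sublists_nil]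
        refine List.count_eq_zero.mpr ?_
        simp only [List.mem_singleton]
        intro hcon
        have := congrArg List.length hcon
        simp at this
      rw [Finset.sum_congr rfl fun σ _ => hz σ]
      simp [List.count_nil]
  | cons a u ih =>
    intro n V hV
    cases n with
    | zero =>
      simp only [List.ofFn_zero]
      rw [Finset.sum_congr rfl fun σ _ => subwordCount_nil_right (a :: u)]
      simp
    | succ m =>
      have hsplit : ∀ σ : Equiv.Perm (Fin (m + 1)),
          subwordCount (a :: u) (List.ofFn fun k => V (σ k))
            = subwordCount u (List.ofFn fun k => V (σ k))
              + if V (σ 0) = a then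
                  subwordCount u (List.ofFn fun i : Fin m => V (σ i.succ)) else 0 := by
        intro σ
        rw [List.ofFn_succ]
        exact subwordCount_cons_cons a _ u _
      rw [Finset.sum_congr rfl fun σ _ => hsplit σ, Finset.sum_add_distrib,
        ih (m + 1) V hV]
      -- second sum via decomposeFin
      have hre : ∑ σ : Equiv.Perm (Fin (m + 1)),
          (if V (σ 0) = a then
            subwordCount u (List.ofFn fun i : Fin m => V (σ i.succ)) else 0)
          = ∑ p : Fin (m + 1), if V p = a then
              ∏ i : Fin m, u.count (V (Equiv.swap 0 p i.succ)) else 0 := by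
        rw [← Equiv.sum_comp (Equiv.Perm.decomposeFin (n := m)).symm]
        rw [Fintype.sum_prod_type]
        refine Finset.sum_congr rfl fun p _ => ?_
        by_cases hp : V p = a
        · simp only [Equiv.Perm.decomposeFin_symm_apply_zero,
            Equiv.Perm.decomposeFin_symm_apply_succ, hp, if_pos]
          have hV' : Function.Injective fun i : Fin m => V (Equiv.swap 0 p i.succ) := by
            intro x y hxy
            have := hV hxy
            have := (Equiv.swap 0 p).injective this
            exact Fin.succ_injective m this
          exact ih m (fun i => V (Equiv.swap 0 p i.succ)) hV'
        · simp [Equiv.Perm.decomposeFin_symm_apply_zero, hp]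
      rw [hre]
      -- now compare with RHS
      have hRHS : ∀ k : Fin (m + 1), (a :: u).count (V k)
          = u.count (V k) + if V k = a then 1 else 0 := by
        intro k
        rw [List.count_cons]
        by_cases h : V k = a
        · simp [h]
        · simp [h, Ne.symm h]
      rw [Finset.prod_congr rfl fun k _ => hRHS k]
      by_cases hex : ∃ p, V p = a
      · obtain ⟨p₀, hp₀⟩ := hex
        have huniq : ∀ p, V p = a → p = p₀ := fun p hp => hV (hp.trans hp₀.symm)
        rw [Finset.sum_eq_single p₀ (fun p _ hp => if_neg (fun h => hp (huniq p h)))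
          (fun h => absurd (Finset.mem_univ p₀) h), if_pos hp₀]
        have hne : ∀ i : Fin m, Equiv.swap 0 p₀ i.succ ≠ p₀ := by
          intro i hcon
          have h2 := congrArg (Equiv.swap 0 p₀) hcon
          rw [Equiv.swap_apply_self, Equiv.swap_apply_right] at h2
          exact Fin.succ_ne_zero i h2
        rw [prod_swap_succ (fun k => u.count (V k) + if V k = a then 1 else 0) p₀,
          prod_swap_succ (fun k => u.count (V k)) p₀, if_pos hp₀]
        have hiz : ∀ i : Fin m,
            (u.count (V (Equiv.swap 0 p₀ i.succ))
              + if V (Equiv.swap 0 p₀ i.succ) = a then 1 else 0)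
            = u.count (V (Equiv.swap 0 p₀ i.succ)) := by
          intro i
          rw [if_neg, add_zero]
          intro hcon
          exact hne i (huniq _ hcon)
        rw [Finset.prod_congr rfl fun i _ => hiz i]
        ring
      · push_neg at hex
        have h1 : ∀ p : Fin (m + 1),
            (if V p = a then ∏ i : Fin m, u.count (V (Equiv.swap 0 p i.succ)) else 0) = 0 :=
          fun p => if_neg (hex p)
        have h2 : ∀ k : Fin (m + 1),
            (u.count (V k) + if V k = a then 1 else 0) = u.count (V k) := by
          intro k; rw [if_neg (hex k), add_zero]
        rw [Finset.sum_congr rfl fun p _ => h1 p,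
          Finset.prod_congr rfl fun k _ => h2 k]
        simp

lemma count_of_mem_conjClass {w u : List α} (hu : u ∈ conjClass w) (b : α) :
    u.count b = w.count b := by
  rcases Finset.mem_insert.mp hu with h | h
  · rw [h]
  · obtain ⟨i, _, hi⟩ := Finset.mem_image.mp h
    rw [← hi]
    exact (List.rotate_perm w i).count_eq b

lemma conjClass_card_ne_zero (w : List α) : ((conjClass w).card : ℚ) ≠ 0 := by
  have : w ∈ conjClass w := Finset.mem_insert_self w _
  have hpos : 0 < (conjClass w).card := Finset.card_pos.mpr ⟨w, this⟩
  exact_mod_cast hpos.ne'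

end Aux

/-- Theorem 14: for a circular word `[w]` over `{a_1, …, a_s} = Fin s`, the sum over all
permutations `σ` of the average subword counts `|[w]|_{a_{σ(1)} ⋯ a_{σ(s)}}` equals
`∏ i, |[w]|_{a_i}`. -/
theorem stmt_3 (s : ℕ) (w : List (Fin s)) :
    ∑ σ : Equiv.Perm (Fin s), circCount w (List.ofFn fun k => σ k) =
      ∏ i : Fin s, circCount w [i] := by
  have hcard := conjClass_card_ne_zero w
  have hcirc_single : ∀ i : Fin s, circCount w [i] = (w.count i : ℚ) := by
    intro i
    unfold circCount
    rw [Finset.sum_congr rfl fun u hu => by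
      rw [subwordCount_singleton, count_of_mem_conjClass hu]]
    rw [Finset.sum_const, nsmul_eq_mul]
    field_simp
  have hLHS : ∀ u ∈ conjClass w,
      (∑ σ : Equiv.Perm (Fin s), (subwordCount u (List.ofFn fun k => σ k) : ℚ))
        = ∏ i : Fin s, (w.count i : ℚ) := by
    intro u hu
    have hkey := key_sum_perm u s id Function.injective_id
    have : ∑ σ : Equiv.Perm (Fin s), subwordCount u (List.ofFn fun k => σ k)
        = ∏ i : Fin s, u.count i := by simpa using hkey
    calc (∑ σ : Equiv.Perm (Fin s), (subwordCount u (List.ofFn fun k => σ k) : ℚ))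
        = ((∑ σ : Equiv.Perm (Fin s), subwordCount u (List.ofFn fun k => σ k) : ℕ) : ℚ) := by
          push_cast; rfl
      _ = ((∏ i : Fin s, u.count i : ℕ) : ℚ) := by rw [this]
      _ = ∏ i : Fin s, (u.count i : ℚ) := by push_cast; rfl
      _ = ∏ i : Fin s, (w.count i : ℚ) := by
          exact Finset.prod_congr rfl fun i _ => by rw [count_of_mem_conjClass hu]
  calc ∑ σ : Equiv.Perm (Fin s), circCount w (List.ofFn fun k => σ k)
      = (∑ σ : Equiv.Perm (Fin s), ∑ u ∈ conjClass w,
          (subwordCount u (List.ofFn fun k => σ k) : ℚ)) / ((conjClass w).card : ℚ) := by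
        unfold circCount
        rw [Finset.sum_div]
    _ = (∑ u ∈ conjClass w, ∑ σ : Equiv.Perm (Fin s),
          (subwordCount u (List.ofFn fun k => σ k) : ℚ)) / ((conjClass w).card : ℚ) := by
        rw [Finset.sum_comm]
    _ = (∑ u ∈ conjClass w, ∏ i : Fin s, (w.count i : ℚ)) / ((conjClass w).card : ℚ) := by
        rw [Finset.sum_congr rfl hLHS]
    _ = ∏ i : Fin s, (w.count i : ℚ) := by
        rw [Finset.sum_const, nsmul_eq_mul]
        field_simp
    _ = ∏ i : Fin s, circCount w [i] := by
        exact Finset.prod_congr rfl fun i _ => (hcirc_single i).symm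
end

section
/- Let Σ = {a_1 < a_2 < ⋯ < a_s} be an ordered alphabet and w ∈ Σ*. The Parikh matrix M = Ψ_Σ(w) satisfies: M_{i,i} = 1 for 1 ≤ i ≤ s+1; M_{i,j} = 0 for 1 ≤ j < i ≤ s+1; and M_{i,j+1} = |w|_{a_i a_{i+1} ⋯ a_j} for 1 ≤ i ≤ j ≤ s. -/
lemma segWord_val {s : ℕ} (i j : Fin s) :
    (segWord i j).map Fin.val
      = (List.range (j.val - i.val + 1)).map (fun t => i.val + t) := by
  simp only [segWord, List.map_map]
  exact List.attach_map_val (f := fun t => i.val + t)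

lemma segWord_self {s : ℕ} (i : Fin s) : segWord i i = [i] := by
  apply List.map_injective_iff.mpr Fin.val_injective
  rw [segWord_val]
  simp [List.range_succ]

lemma segWord_concat {s : ℕ} {i j : Fin s} (h : i < j) :
    segWord i j = segWord i ⟨j.val - 1, by omega⟩ ++ [j] := by
  apply List.map_injective_iff.mpr Fin.val_injective
  rw [segWord_val, List.map_append, segWord_val]
  have hij : i.val < j.val := h
  have h1 : j.val - i.val + 1 = (j.val - 1 - i.val + 1) + 1 := by omega
  rw [h1, List.range_succ, List.map_append]
  simp only [List.map_cons, List.map_nil]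
  congr 2
  omega

lemma subwordCount_nil_s4 {α : Type*} [DecidableEq α] (w : List α) :
    subwordCount w [] = 1 := by
  induction w using List.reverseRecOn with
  | nil => simp [subwordCount]
  | append_singleton w a ih =>
    unfold subwordCount at *
    rw [List.sublists_concat, List.count_append, ih]
    have : ([] : List α) ∉ w.sublists.map (fun x => x ++ [a]) := by
      simp
    rw [List.count_eq_zero.mpr this]

lemma subwordCount_concat {α : Type*} [DecidableEq α] (w : List α) (a b : α)
    (u : List α) :
    subwordCount (w ++ [a]) (u ++ [b])
      = subwordCount w (u ++ [b]) + if b = a then subwordCount w u else 0 := by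
  unfold subwordCount
  rw [List.sublists_concat, List.count_append]
  congr 1
  by_cases hab : b = a
  · subst hab
    rw [if_pos rfl]
    have := List.count_map_of_injective w.sublists _ (List.append_left_injective [b]) u
    convert this using 2 <;> exact lawful_beq_subsingleton _ _
  · rw [if_neg hab]
    apply List.count_eq_zero.mpr
    intro hmem
    obtain ⟨x, _, hx⟩ := List.mem_map.mp hmem
    have := List.append_inj_right' hx rfl
    simp at this
    exact hab this.symm

lemma parikh_mul_letter {s : ℕ} (M : Matrix (Fin (s + 1)) (Fin (s + 1)) ℚ)
    (a : Fin s) (i j : Fin (s + 1)) :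
    (M * parikhLetter a) i j
      = M i j + if j = a.succ then M i a.castSucc else 0 := by
  rw [parikhLetter, Matrix.mul_add, Matrix.mul_one, Matrix.add_apply]
  congr 1
  by_cases hj : j = a.succ
  · subst hj
    rw [if_pos rfl, Matrix.mul_single_apply_same, mul_one]
  · rw [if_neg hj, Matrix.mul_single_apply_of_ne _ _ _ _ _ hj]


/-- Theorem 3: the entries of the Parikh matrix `M = Ψ_Σ(w)` of a word `w` over
`{a_1 < ⋯ < a_s} = Fin s`: unit diagonal, zero below the diagonal, and
`M_{i,j+1} = |w|_{a_i a_{i+1} ⋯ a_j}` for `i ≤ j`. -/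
theorem stmt_4 (s : ℕ) (w : List (Fin s)) :
    (∀ i : Fin (s + 1), parikhMatrix w i i = 1) ∧
    (∀ i j : Fin (s + 1), j < i → parikhMatrix w i j = 0) ∧
    (∀ i j : Fin s, i ≤ j →
      parikhMatrix w i.castSucc j.succ = (subwordCount w (segWord i j) : ℚ)) := by
  induction w using List.reverseRecOn with
  | nil =>
    refine ⟨fun i => ?_, fun i j h => ?_, fun i j h => ?_⟩
    · simp [parikhMatrix]
    · simp [parikhMatrix, Matrix.one_apply_ne (ne_of_gt h)]
    · have h1 : (i.castSucc : Fin (s+1)) ≠ j.succ := by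
        intro he
        have : (i.castSucc : Fin (s+1)).val = j.succ.val := by rw [he]
        simp only [Fin.coe_castSucc, Fin.val_succ] at this
        have : i.val ≤ j.val := h
        omega
      have h2 : segWord i j ≠ [] := by
        intro he
        have := congrArg List.length (congrArg (List.map Fin.val) he)
        rw [segWord_val] at this
        simp at this
      simp [parikhMatrix, Matrix.one_apply_ne h1, subwordCount,
        List.count_singleton, h2]
  | append_singleton w a IH =>
    obtain ⟨IH1, IH2, IH3⟩ := IH
    have hM : ∀ i j : Fin (s+1), parikhMatrix (w ++ [a]) i j
        = parikhMatrix w i j + if j = a.succ then parikhMatrix w i a.castSucc else 0 := by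
      intro i j
      have : parikhMatrix (w ++ [a]) = parikhMatrix w * parikhLetter a := by
        simp [parikhMatrix]
      rw [this, parikh_mul_letter]
    have hlt : (a.castSucc : Fin (s+1)) < a.succ := Fin.castSucc_lt_succ (i := a)
    refine ⟨fun i => ?_, fun i j h => ?_, fun i j h => ?_⟩
    · rw [hM, IH1]
      by_cases hi : i = a.succ
      · rw [if_pos hi, IH2 _ _ (hi ▸ hlt), add_zero]
      · rw [if_neg hi, add_zero]
    · rw [hM, IH2 _ _ h]
      by_cases hj : j = a.succ
      · rw [if_pos hj, IH2 _ _ (lt_trans (hj ▸ hlt) h), add_zero]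
      · rw [if_neg hj, add_zero]
    · rw [hM]
      by_cases haj : a = j
      · subst haj
        rw [if_pos rfl]
        rcases eq_or_lt_of_le h with heq | hlt'
        · subst heq
          rw [segWord_self, IH1]
          have hc : subwordCount (w ++ [i]) [i] = subwordCount w [i] + 1 := by
            have := subwordCount_concat w i i []
            simpa [subwordCount_nil_s4] using this
          rw [hc]
          have hv := IH3 i i le_rfl
          rw [segWord_self] at hv
          rw [hv]
          push_cast
          ring
        · have hijv : i.val < a.val := hlt'
          have hks : a.val - 1 < s := by have := a.isLt; omega
          set k : Fin s := ⟨a.val - 1, hks⟩ with hk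
          have hik : i ≤ k := by
            rw [Fin.le_def]; simp only [hk]; omega
          have hkj : a.castSucc = k.succ := by
            apply Fin.ext; simp only [Fin.coe_castSucc, Fin.val_succ, hk]; omega
          have hsw := segWord_concat hlt'
          have hc : subwordCount (w ++ [a]) (segWord i a)
              = subwordCount w (segWord i a) + subwordCount w (segWord i ⟨a.val - 1, by have := a.isLt; omega⟩) := by
            rw [hsw, subwordCount_concat, if_pos rfl]
          rw [hc, hkj]
          push_cast
          rw [IH3 i a h, IH3 i k hik]
      · rw [if_neg (fun he => haj (Fin.succ_injective _ he).symm), add_zero]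
        rcases eq_or_lt_of_le h with heq | hlt'
        · subst heq
          have hsw : segWord i i = [] ++ [i] := by rw [segWord_self]; rfl
          rw [hsw, subwordCount_concat, if_neg (fun he => haj he.symm), add_zero, ← hsw]
          exact IH3 i i le_rfl
        · have hsw := segWord_concat hlt'
          rw [hsw, subwordCount_concat, if_neg (fun he => haj he.symm), add_zero, ← hsw]
          exact IH3 i j h
end

section
/- Let Σ be an ordered alphabet and w ∈ Σ*. Then the inverse of the Parikh matrix Ψ_Σ(w) equals the alternate Parikh matrix of the reverse of w: [Ψ_Σ(w)]^{−1} = \overline{Ψ}_Σ(mi(w)). -/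
lemma altMatrix_mul {n : ℕ} (A B : Matrix (Fin n) (Fin n) ℚ) :
    altMatrix (A * B) = altMatrix A * altMatrix B := by
  ext i j
  simp only [altMatrix, Matrix.of_apply, Matrix.mul_apply, Finset.mul_sum]
  refine Finset.sum_congr rfl fun k _ => ?_
  have hk : ((-1 : ℚ)) ^ (k.val * 2) = 1 := by
    rw [mul_comm, pow_mul]; norm_num
  rw [pow_add, pow_add, pow_add]
  linear_combination (-((-1 : ℚ) ^ i.val * (-1) ^ j.val * A i k * B k j)) * hk

lemma altMatrix_one {n : ℕ} : altMatrix (1 : Matrix (Fin n) (Fin n) ℚ) = 1 := by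
  ext i j
  simp only [altMatrix, Matrix.of_apply, Matrix.one_apply]
  by_cases h : i = j
  · subst h; rw [← two_mul, pow_mul]; norm_num
  · simp [h]

lemma parikhMatrix_append {s : ℕ} (a b : List (Fin s)) :
    parikhMatrix (a ++ b) = parikhMatrix a * parikhMatrix b := by
  simp [parikhMatrix]

lemma parikhLetter_mul_alt {s : ℕ} (q : Fin s) :
    parikhLetter q * altMatrix (parikhLetter q) = 1 := by
  have halt : altMatrix (parikhLetter q) =
      1 - Matrix.single q.castSucc q.succ 1 := by
    ext i j
    simp only [altMatrix, parikhLetter, Matrix.of_apply, Matrix.add_apply,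
      Matrix.sub_apply, Matrix.one_apply, Matrix.single, Matrix.of_apply]
    by_cases h1 : i = j
    · subst h1
      have hne : ¬(q.castSucc = i ∧ q.succ = i) := by
        rintro ⟨h2, h3⟩
        have h4 : q.castSucc = q.succ := h2.trans h3.symm
        simp [Fin.ext_iff] at h4
      rw [← two_mul, pow_mul]
      simp [hne]
    · by_cases h2 : q.castSucc = i ∧ q.succ = j
      · obtain ⟨h3, h4⟩ := h2
        subst h3; subst h4
        have h5 : q.castSucc.val + q.succ.val = 2 * q.val + 1 := by
          simp; omega
        rw [h5, pow_succ, pow_mul]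
        norm_num [h1]
      · simp [h1, h2]
  rw [halt, parikhLetter]
  have hE : Matrix.single q.castSucc q.succ (1:ℚ) *
      Matrix.single q.castSucc q.succ (1:ℚ) = 0 := by
    apply Matrix.single_mul_single_of_ne
    simp [Fin.ext_iff]
  have : (1 + Matrix.single q.castSucc q.succ (1:ℚ)) *
      (1 - Matrix.single q.castSucc q.succ 1) =
      1 - Matrix.single q.castSucc q.succ 1 *
        Matrix.single q.castSucc q.succ 1 := by
    noncomm_ring
  rw [this, hE, sub_zero]

lemma parikh_mul_alt_rev {s : ℕ} (w : List (Fin s)) :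
    parikhMatrix w * altMatrix (parikhMatrix w.reverse) = 1 := by
  induction w with
  | nil => simp [parikhMatrix, altMatrix_one]
  | cons a t ih =>
    have h1 : parikhMatrix (a :: t) = parikhLetter a * parikhMatrix t := by
      simp [parikhMatrix]
    have h2 : (a :: t).reverse = t.reverse ++ [a] := by simp
    rw [h1, h2, parikhMatrix_append, altMatrix_mul, mul_assoc,
      ← mul_assoc (parikhMatrix t), ih, one_mul]
    have h3 : parikhMatrix [a] = parikhLetter a := by simp [parikhMatrix]
    rw [h3, parikhLetter_mul_alt]

/-- Theorem 19: the inverse of the Parikh matrix of `w` is the alternate Parikh matrix of the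
reverse (mirror image) of `w`: `[Ψ_Σ(w)]⁻¹ = Ψ̄_Σ(mi(w))`. -/
theorem stmt_6 {s : ℕ} (w : List (Fin s)) :
    (parikhMatrix w)⁻¹ = altMatrix (parikhMatrix w.reverse) := by
  apply Matrix.inv_eq_right_inv
  exact parikh_mul_alt_rev w
end

section
/- Let Σ = {a < b < c} and w ∈ Σ*, and let mi(w) denote the reverse of w. Then |mi(w)|_{abc} = |w|_a·|w|_b·|w|_c − |w|_a·|w|_{bc} − |w|_{ab}·|w|_c + |w|_{abc}. -/
lemma count_beq_irrel {α : Type*} [DecidableEq α] (v : List α) (l : List (List α)) :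
    @List.count _ List.instBEq v l = @List.count _ instBEqOfDecidableEq v l := by
  induction l with
  | nil => rfl
  | cons x l ih =>
    rw [@List.count_cons _ List.instBEq, @List.count_cons _ instBEqOfDecidableEq, ih]
    congr 1
    by_cases h : x = v <;> simp [h]

/-- recursive subsequence-occurrence count -/
def cnt {α : Type*} [DecidableEq α] : List α → List α → ℕ
  | _, [] => 1
  | [], _ :: _ => 0
  | x :: w, y :: v => cnt w (y :: v) + if x = y then cnt w v else 0

lemma subwordCount_eq_cnt {α : Type*} [DecidableEq α] (w v : List α) :
    (w.sublists.count v) = cnt w v := by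
  rw [(List.sublists_perm_sublists' w).count_eq]
  induction w generalizing v with
  | nil =>
    cases v with
    | nil => simp [cnt]
    | cons y v => simp [cnt]
  | cons x w ih =>
    cases v with
    | nil =>
      simp only [cnt, List.sublists'_cons, List.count_append]
      rw [ih]
      have : List.count ([] : List α) (List.map (List.cons x) w.sublists') = 0 := by
        rw [List.count_eq_zero]
        simp
      simp [this, cnt]
    | cons y v =>
      simp only [cnt, List.sublists'_cons, List.count_append]
      rw [ih]
      by_cases h : x = y
      · subst h
        rw [List.count_map_of_injective _ _ (fun a b => by simp),
          ih]
        simp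
      · have : List.count (y :: v) (List.map (List.cons x) w.sublists') = 0 := by
          rw [List.count_eq_zero]
          intro hm
          obtain ⟨u, _, hu⟩ := List.mem_map.mp hm
          simp only [List.cons.injEq] at hu
          exact h hu.1
        simp [this, h]

lemma cnt_cons {α : Type*} [DecidableEq α] (x y : α) (w v : List α) :
    cnt (x :: w) (y :: v) = cnt w (y :: v) + if x = y then cnt w v else 0 := rfl

lemma cnt_nil {α : Type*} [DecidableEq α] (w : List α) : cnt w [] = 1 := by
  cases w <;> rfl

lemma key (w : List (Fin 3)) :
    ((cnt w [1,0] : ℤ) + cnt w [0,1] = cnt w [0] * cnt w [1]) ∧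
    ((cnt w [2,1,0] : ℤ) =
      cnt w [0] * cnt w [1] * cnt w [2] - cnt w [0] * cnt w [1,2]
        - cnt w [0,1] * cnt w [2] + cnt w [0,1,2]) := by
  induction w with
  | nil => simp [cnt]
  | cons x w ih =>
    obtain ⟨ih1, ih2⟩ := ih
    fin_cases x <;>
      · simp (config := { decide := true }) only [cnt_cons, cnt_nil, if_true, if_false]
        push_cast
        constructor <;>
          first
            | linear_combination ih1
            | linear_combination ih2
            | linear_combination ih1 + ih2

lemma subwordCount_reverse {α : Type*} [DecidableEq α] (w v : List α) :
    subwordCount w.reverse v = subwordCount w v.reverse := by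
  unfold subwordCount
  rw [(List.sublists_perm_sublists' w.reverse).count_eq,
    List.sublists'_reverse, ← List.reverse_reverse v,
    List.count_map_of_injective _ _ List.reverse_injective, List.reverse_reverse]


/-- Remark 20: for a word `w` over `{a < b < c} = Fin 3` (with `a = 0`, `b = 1`, `c = 2`),
`|mi(w)|_{abc} = |w|_a|w|_b|w|_c − |w|_a|w|_{bc} − |w|_{ab}|w|_c + |w|_{abc}`. -/
theorem stmt_7 (w : List (Fin 3)) :
    (subwordCount w.reverse [0, 1, 2] : ℤ) =
      (subwordCount w [0] : ℤ) * (subwordCount w [1] : ℤ) * (subwordCount w [2] : ℤ)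
        - (subwordCount w [0] : ℤ) * (subwordCount w [1, 2] : ℤ)
        - (subwordCount w [0, 1] : ℤ) * (subwordCount w [2] : ℤ)
        + (subwordCount w [0, 1, 2] : ℤ) := by
  rw [subwordCount_reverse]
  simp only [subwordCount, subwordCount_eq_cnt, List.reverse_cons, List.reverse_nil,
    List.nil_append, List.cons_append]
  exact (key w).2
end

section
/- Let Σ = {a < b} be the binary ordered alphabet and w ∈ Σ*. Then the Parikh matrix of the circular word [w] is the 3×3 rational matrix with rows (1, |w|_a, |w|_a·|w|_b/2), (0, 1, |w|_b), (0, 0, 1). In particular, |[w]|_{ab} = |w|_a·|w|_b/2, so Ψ_Σ([w]) depends only on the Parikh vector (|w|_a, |w|_b) of w. -/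
lemma count_sublists_map_concat {α : Type*} [DecidableEq α] (t : List α) (y : α)
    (v : List α) :
    List.count v (t.sublists.map fun z => z ++ [y]) =
      if h : v ≠ [] then
        (if v.getLast h = y then List.count (v.dropLast) t.sublists else 0)
      else 0 := by
  split
  · rename_i hne
    split
    · rename_i hlast
      simp only [List.count, List.countP_map]
      apply List.countP_congr
      intro z _
      simp only [Function.comp_apply, beq_iff_eq]
      constructor
      · rintro rfl
        simp
      · intro hz
        have := List.dropLast_append_getLast hne
        rw [hlast] at this
        rw [← this, hz]
    · rename_i hlast
      rw [List.count_eq_zero]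
      intro hmem
      obtain ⟨z, hz, hzx⟩ := List.mem_map.mp hmem
      subst hzx
      simp at hlast
  · rename_i hne
    push_neg at hne
    subst hne
    rw [List.count_eq_zero]
    intro hmem
    obtain ⟨z, hz, hzx⟩ := List.mem_map.mp hmem
    simp at hzx

lemma count_sublists_nil {α : Type*} [DecidableEq α] (w : List α) :
    w.sublists.count ([] : List α) = 1 := by
  induction w using List.reverseRecOn with
  | nil => simp
  | append_singleton t x ih =>
    rw [List.sublists_concat, List.count_append, ih, count_sublists_map_concat]
    simp

lemma count_sublists_single {α : Type*} [DecidableEq α] (w : List α) (x : α) :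
    w.sublists.count [x] = w.count x := by
  induction w using List.reverseRecOn with
  | nil => simp
  | append_singleton t y ih =>
    rw [List.sublists_concat, List.count_append, ih, List.count_append,
      count_sublists_map_concat]
    rcases eq_or_ne x y with h | h
    · subst h
      simp [count_sublists_nil]
    · simp [h, List.count_singleton', Ne.symm h]

lemma subwordCount_concat01 (w : List (Fin 2)) (x : Fin 2) :
    subwordCount (w ++ [x]) [0, 1] =
      subwordCount w [0, 1] + if x = 1 then w.count 0 else 0 := by
  unfold subwordCount
  rw [List.sublists_concat, List.count_append, count_sublists_map_concat]
  rcases eq_or_ne x 1 with h | h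
  · subst h
    simp [count_sublists_single]
  · simp [h, Ne.symm h]

lemma parikhLetter_zero : parikhLetter (0 : Fin 2) = !![1,1,0;0,1,0;0,0,1] := by
  ext i j
  fin_cases i <;> fin_cases j <;>
    simp [parikhLetter, Matrix.single, Matrix.one_apply, Fin.ext_iff, Matrix.vecHead, Matrix.vecTail]

lemma parikhLetter_one : parikhLetter (1 : Fin 2) = !![1,0,0;0,1,1;0,0,1] := by
  ext i j
  fin_cases i <;> fin_cases j <;>
    simp [parikhLetter, Matrix.single, Matrix.one_apply, Fin.ext_iff, Matrix.vecHead, Matrix.vecTail]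

lemma parikhMatrix_concat (w : List (Fin 2)) (x : Fin 2) :
    parikhMatrix (w ++ [x]) = parikhMatrix w * parikhLetter x := by
  unfold parikhMatrix
  rw [List.map_append, List.prod_append]
  simp

lemma fin2_cases (x : Fin 2) : x = 0 ∨ x = 1 := by omega

lemma parikhMatrix_eq (w : List (Fin 2)) :
    parikhMatrix w = !![1, (w.count 0 : ℚ), (subwordCount w [0,1] : ℚ);
                        0, 1, (w.count 1 : ℚ); 0, 0, 1] := by
  induction w using List.reverseRecOn with
  | nil =>
    have : parikhMatrix ([] : List (Fin 2)) = 1 := by simp [parikhMatrix]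
    rw [this]
    have : subwordCount ([] : List (Fin 2)) [0,1] = 0 := by decide
    rw [this]
    norm_num
    ext i j
    fin_cases i <;> fin_cases j <;>
      simp [Matrix.one_apply, Fin.ext_iff, Matrix.vecHead, Matrix.vecTail]
  | append_singleton t x ih =>
    rw [parikhMatrix_concat, ih, subwordCount_concat01]
    rcases fin2_cases x with h | h <;> subst h
    · rw [parikhLetter_zero, Matrix.mul_fin_three]
      simp [List.count_append]
      norm_num
      ring_nf
    · rw [parikhLetter_one, Matrix.mul_fin_three]
      simp [List.count_append]
      norm_num
      push_cast
      ring_nf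
      exact ⟨trivial, trivial⟩

lemma subwordCount_append (u v : List (Fin 2)) :
    (subwordCount (u ++ v) [0,1] : ℚ) =
      subwordCount u [0,1] + subwordCount v [0,1] + u.count 0 * v.count 1 := by
  have h : parikhMatrix (u ++ v) = parikhMatrix u * parikhMatrix v := by
    unfold parikhMatrix
    rw [List.map_append, List.prod_append]
  rw [parikhMatrix_eq, parikhMatrix_eq, parikhMatrix_eq, Matrix.mul_fin_three] at h
  have := congrFun (congrFun h 0) 2
  simp at this
  rw [this]; ring

lemma subwordCount_rotate (w : List (Fin 2)) (i : ℕ) (hi : i ≤ w.length) :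
    (subwordCount (w.rotate i) [0,1] : ℚ) =
      subwordCount w [0,1] + (w.count 0 : ℚ) * ((w.take i).count 1)
        - (w.count 1 : ℚ) * ((w.take i).count 0) := by
  have hw : w = w.take i ++ w.drop i := (List.take_append_drop i w).symm
  rw [List.rotate_eq_drop_append_take hi, subwordCount_append]
  have h2 : (subwordCount w [0,1] : ℚ) = subwordCount (w.take i) [0,1]
      + subwordCount (w.drop i) [0,1] + (w.take i).count 0 * (w.drop i).count 1 := by
    conv_lhs => rw [hw]
    rw [subwordCount_append]
  have hc0 : (w.count 0 : ℚ) = (w.take i).count 0 + (w.drop i).count 0 := by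
    conv_lhs => rw [hw]
    rw [List.count_append]; push_cast; ring
  have hc1 : (w.count 1 : ℚ) = (w.take i).count 1 + (w.drop i).count 1 := by
    conv_lhs => rw [hw]
    rw [List.count_append]; push_cast; ring
  rw [h2, hc0, hc1]
  push_cast
  ring

noncomputable def SA (w : List (Fin 2)) : ℚ :=
  ∑ i ∈ Finset.range w.length, ((w.take i).count 0 : ℚ)
noncomputable def SB (w : List (Fin 2)) : ℚ :=
  ∑ i ∈ Finset.range w.length, ((w.take i).count 1 : ℚ)

lemma SA_concat (w : List (Fin 2)) (x : Fin 2) :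
    SA (w ++ [x]) = SA w + w.count 0 := by
  unfold SA
  rw [List.length_append, List.length_singleton, Finset.sum_range_succ]
  congr 1
  · apply Finset.sum_congr rfl
    intro i hi
    rw [List.take_append_of_le_length (le_of_lt (Finset.mem_range.mp hi))]
  · rw [List.take_left]

lemma SB_concat (w : List (Fin 2)) (x : Fin 2) :
    SB (w ++ [x]) = SB w + w.count 1 := by
  unfold SB
  rw [List.length_append, List.length_singleton, Finset.sum_range_succ]
  congr 1
  · apply Finset.sum_congr rfl
    intro i hi
    rw [List.take_append_of_le_length (le_of_lt (Finset.mem_range.mp hi))]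
  · rw [List.take_left]

lemma invariants (w : List (Fin 2)) :
    (w.length : ℚ) = w.count 0 + w.count 1 ∧
    2 * (subwordCount w [0,1] : ℚ) + w.length * w.count 0
      = w.count 0 + (w.count 0 : ℚ) * w.count 1 + 2 * SA w ∧
    2 * SB w + 2 * (subwordCount w [0,1] : ℚ) + w.count 1
      = (w.length : ℚ) * w.count 1 + (w.count 0 : ℚ) * w.count 1 := by
  induction w using List.reverseRecOn with
  | nil =>
    refine ⟨by simp, ?_, ?_⟩ <;> simp [SA, SB] <;> decide
  | append_singleton t x ih =>
    obtain ⟨hn, hK, hM⟩ := ih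
    rw [SA_concat, SB_concat, List.length_append, List.length_singleton]
    rw [subwordCount_concat01]
    rcases fin2_cases x with h | h <;> subst h <;>
      simp only [List.count_append, List.count_singleton', if_true, if_false] <;>
      push_cast <;> norm_num
    · exact ⟨by linarith, by linear_combination hK + hn, by linear_combination hM⟩
    · exact ⟨by linarith, by linear_combination hK, by linear_combination hM - hn⟩

lemma rotsum (w : List (Fin 2)) :
    ∑ i ∈ Finset.range w.length, (subwordCount (w.rotate i) [0,1] : ℚ)
      = (w.length : ℚ) * w.count 0 * w.count 1 / 2 := by
  obtain ⟨hn, hK, hM⟩ := invariants w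
  have h1 : ∑ i ∈ Finset.range w.length, (subwordCount (w.rotate i) [0,1] : ℚ)
      = ∑ i ∈ Finset.range w.length,
        ((subwordCount w [0,1] : ℚ) + (w.count 0 : ℚ) * ((w.take i).count 1)
          - (w.count 1 : ℚ) * ((w.take i).count 0)) := by
    apply Finset.sum_congr rfl
    intro i hi
    exact subwordCount_rotate w i (le_of_lt (Finset.mem_range.mp hi))
  rw [h1]
  rw [Finset.sum_sub_distrib, Finset.sum_add_distrib, Finset.sum_const,
    ← Finset.mul_sum, ← Finset.mul_sum, Finset.card_range]
  show w.length • (subwordCount w [0,1] : ℚ) + (w.count 0 : ℚ) * SB w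
      - (w.count 1 : ℚ) * SA w = _
  rw [nsmul_eq_mul]
  linear_combination ((w.count 0 : ℚ)/2) * hM + ((w.count 1 : ℚ)/2) * hK
    + ((subwordCount w [0,1] : ℚ) - (w.count 0 : ℚ) * (w.count 1 : ℚ)/2) * hn

section Fiber

variable {α : Type*} [DecidableEq α] (w : List α)

/-- fiber of `u` under `i ↦ w.rotate i` on `range w.length` -/
def rotFiber (u : List α) : Finset ℕ :=
  (Finset.range w.length).filter fun i => w.rotate i = u

lemma rotFiber_card (j : ℕ) (hj : j < w.length) :
    (rotFiber w (w.rotate j)).card = (rotFiber w w).card := by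
  set n := w.length with hn
  apply Finset.card_bij' (fun m _ => (m + (n - j)) % n) (fun i _ => (i + j) % n)
  · intro m hm
    simp only [rotFiber, Finset.mem_filter, Finset.mem_range] at hm ⊢
    obtain ⟨hmn, hmu⟩ := hm
    refine ⟨Nat.mod_lt _ (by omega), ?_⟩
    rw [List.rotate_mod, ← List.rotate_rotate, hmu, List.rotate_rotate,
      show j + (n - j) = w.length by omega, List.rotate_length]
  · intro i hi
    simp only [rotFiber, Finset.mem_filter, Finset.mem_range] at hi ⊢
    obtain ⟨hin, hiw⟩ := hi
    refine ⟨Nat.mod_lt _ (by omega), ?_⟩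
    rw [List.rotate_mod, ← List.rotate_rotate, hiw]
  · intro m hm
    simp only [rotFiber, Finset.mem_filter, Finset.mem_range] at hm
    rw [Nat.mod_add_mod, show m + (n - j) + j = m + n by omega,
      Nat.add_mod_right, Nat.mod_eq_of_lt hm.1]
  · intro i hi
    simp only [rotFiber, Finset.mem_filter, Finset.mem_range] at hi
    rw [Nat.mod_add_mod, show i + j + (n - j) = i + n by omega,
      Nat.add_mod_right, Nat.mod_eq_of_lt hi.1]

lemma conjClass_eq (hw : w ≠ []) :
    conjClass w = (Finset.range w.length).image w.rotate := by
  unfold conjClass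
  apply Finset.insert_eq_self.mpr
  apply Finset.mem_image.mpr
  exact ⟨0, Finset.mem_range.mpr (List.length_pos_iff.mpr hw), List.rotate_zero w⟩

lemma rot_sum_eq (hw : w ≠ []) (g : List α → ℚ) :
    ∑ i ∈ Finset.range w.length, g (w.rotate i)
      = ((rotFiber w w).card : ℚ) * ∑ u ∈ conjClass w, g u := by
  rw [conjClass_eq w hw]
  rw [← Finset.sum_fiberwise_of_maps_to (g := w.rotate)
    (t := (Finset.range w.length).image w.rotate)
    (fun i hi => Finset.mem_image_of_mem w.rotate hi) (fun i => g (w.rotate i))]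
  rw [Finset.mul_sum]
  apply Finset.sum_congr rfl
  intro u hu
  obtain ⟨j, hj, rfl⟩ := Finset.mem_image.mp hu
  have : ∀ i ∈ (Finset.range w.length).filter (fun i => w.rotate i = w.rotate j),
      g (w.rotate i) = g (w.rotate j) := by
    intro i hi
    rw [(Finset.mem_filter.mp hi).2]
  rw [Finset.sum_congr rfl this, Finset.sum_const, nsmul_eq_mul]
  congr 1
  exact_mod_cast rotFiber_card w j (Finset.mem_range.mp hj)

end Fiber

/-- Theorem 25: for a word `w` over `{a < b} = Fin 2` (with `a = 0`, `b = 1`), the Parikh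
matrix of the circular word `[w]` is the matrix with rows `(1, |w|_a, |w|_a|w|_b/2)`,
`(0, 1, |w|_b)`, `(0, 0, 1)`; in particular `|[w]|_{ab} = |w|_a|w|_b/2`, so `Ψ_Σ([w])`
depends only on the Parikh vector of `w`. -/
theorem stmt_11 (w : List (Fin 2)) :
    circParikh w =
      !![1, (w.count 0 : ℚ), (w.count 0 : ℚ) * (w.count 1 : ℚ) / 2;
         0, 1, (w.count 1 : ℚ);
         0, 0, 1] ∧
    circCount w [0, 1] = (w.count 0 : ℚ) * (w.count 1 : ℚ) / 2 := by
  rcases eq_or_ne w [] with rfl | hw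
  · constructor
    · show (((conjClass ([] : List (Fin 2))).card : ℚ))⁻¹ • _ = _
      have h1 : conjClass ([] : List (Fin 2)) = {[]} := by decide
      rw [h1]
      simp [parikhMatrix_eq, show subwordCount ([] : List (Fin 2)) [0,1] = 0 from by decide]
    · have h1 : conjClass ([] : List (Fin 2)) = {[]} := by decide
      unfold circCount
      rw [h1]
      simp
      decide
  · -- main case
    set n := w.length with hn
    set a : ℚ := (w.count 0 : ℚ)
    set b : ℚ := (w.count 1 : ℚ)
    set d : ℚ := ((conjClass w).card : ℚ) with hd
    set k : ℚ := ((rotFiber w w).card : ℚ) with hk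
    have hd0 : d ≠ 0 := by
      have : w ∈ conjClass w := Finset.mem_insert_self _ _
      have hpos : 0 < (conjClass w).card := Finset.card_pos.mpr ⟨w, this⟩
      positivity
    have hk0 : k ≠ 0 := by
      have : 0 ∈ rotFiber w w := by
        simp [rotFiber]
        exact List.length_pos_iff.mpr hw
      have hpos : 0 < (rotFiber w w).card := Finset.card_pos.mpr ⟨0, this⟩
      positivity
    have hnkd : (n : ℚ) = k * d := by
      have := rot_sum_eq w hw (fun _ => (1 : ℚ))
      simpa using this
    have hsumc : k * ∑ u ∈ conjClass w, (subwordCount u [0,1] : ℚ)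
        = (n : ℚ) * a * b / 2 := by
      rw [← rot_sum_eq w hw (fun u => (subwordCount u [0,1] : ℚ))]
      exact rotsum w
    have havg : ∑ u ∈ conjClass w, (subwordCount u [0,1] : ℚ) = d * (a * b / 2) := by
      have : k * ∑ u ∈ conjClass w, (subwordCount u [0,1] : ℚ) = k * (d * (a * b / 2)) := by
        rw [hsumc, hnkd]; ring
      exact mul_left_cancel₀ hk0 this
    have hcirc : circCount w [0, 1] = a * b / 2 := by
      unfold circCount
      rw [havg, ← hd]
      field_simp
    refine ⟨?_, hcirc⟩
    show (d⁻¹ : ℚ) • _ = _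
    have hterm : ∀ u ∈ conjClass w,
        parikhMatrix u = !![1, a, (subwordCount u [0,1] : ℚ); 0, 1, b; 0, 0, 1] := by
      intro u hu
      have hperm : u.Perm w := by
        rcases Finset.mem_insert.mp hu with rfl | hmem
        · exact List.Perm.refl u
        · obtain ⟨i, _, rfl⟩ := Finset.mem_image.mp hmem
          exact List.rotate_perm w i
      rw [parikhMatrix_eq, hperm.count_eq, hperm.count_eq]
    rw [Finset.sum_congr rfl hterm]
    ext i j
    rw [Matrix.smul_apply, Matrix.sum_apply]
    fin_cases i <;> fin_cases j <;>
      simp [Matrix.vecHead, Matrix.vecTail, Finset.sum_const, havg, ← hd]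
    all_goals (try field_simp)
    all_goals ring
end

section
/- Let Σ = {a, b} and let w ∈ Σ* be a primitive word of length n. For 0 ≤ i ≤ n−1 let w_i denote the i-th cyclic shift of w. Then 2·Σ_{i=0}^{n−1} |w_i|_{ab} = n·|w|_a·|w|_b. -/
lemma swc_eq (w v : List (Fin 2)) : subwordCount w v = w.sublists'.count v := by
  unfold subwordCount
  have h := (List.sublists_perm_sublists' w).count_eq v
  exact h

lemma count_nil_sublists' (l : List (Fin 2)) : l.sublists'.count [] = 1 := by
  induction l with
  | nil => rfl
  | cons a l ih =>
    rw [List.sublists'_cons, List.count_append, ih]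
    have h : ([] : List (Fin 2)) ∉ l.sublists'.map (a :: ·) := by simp
    rw [List.count_eq_zero_of_not_mem h]

lemma count_map_cons (a : Fin 2) (v : List (Fin 2)) (L : List (List (Fin 2))) :
    (L.map (a :: ·)).count (a :: v) = L.count v := by
  induction L with
  | nil => rfl
  | cons s L ih => simp [List.count_cons, ih]

lemma count_map_cons_ne (a b : Fin 2) (v : List (Fin 2)) (L : List (List (Fin 2)))
    (h : b ≠ a) : (L.map (a :: ·)).count (b :: v) = 0 := by
  apply List.count_eq_zero_of_not_mem
  simp only [List.mem_map]
  rintro ⟨s, -, hs⟩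
  exact h (by injection hs; simp_all)

lemma count_single (x : Fin 2) (l : List (Fin 2)) : l.sublists'.count [x] = l.count x := by
  induction l with
  | nil => simp
  | cons a l ih =>
    rw [List.sublists'_cons, List.count_append, ih, List.count_cons]
    by_cases h : x = a
    · subst h
      rw [show ([x] : List (Fin 2)) = x :: ([] : List (Fin 2)) from rfl, count_map_cons,
        count_nil_sublists']
      simp
    · rw [show ([x] : List (Fin 2)) = x :: ([] : List (Fin 2)) from rfl,
        count_map_cons_ne _ _ _ _ h]
      simp [h, Ne.symm h]

lemma f_cons (a : Fin 2) (l : List (Fin 2)) :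
    subwordCount (a :: l) [0, 1] = subwordCount l [0, 1] + if a = 0 then l.count 1 else 0 := by
  rw [swc_eq, swc_eq, List.sublists'_cons, List.count_append]
  congr 1
  by_cases h : a = 0
  · subst h
    rw [show ([0, 1] : List (Fin 2)) = 0 :: [1] from rfl, count_map_cons, count_single, if_pos rfl]
  · rw [show ([0, 1] : List (Fin 2)) = 0 :: [1] from rfl,
      count_map_cons_ne _ _ _ _ (fun hh => h hh.symm), if_neg h]

lemma f_append (s t : List (Fin 2)) :
    subwordCount (s ++ t) [0, 1]
      = subwordCount s [0, 1] + subwordCount t [0, 1] + s.count 0 * t.count 1 := by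
  induction s with
  | nil => simp [swc_eq]
  | cons a s ih =>
    rw [List.cons_append, f_cons, f_cons, ih, List.count_cons]
    by_cases h : a = 0
    · subst h
      simp [List.count_append]
      ring
    · simp [h, Ne.symm h]

lemma count01 (l : List (Fin 2)) : l.count 0 + l.count 1 = l.length := by
  induction l with
  | nil => rfl
  | cons a l ih =>
    rw [List.count_cons, List.count_cons, List.length_cons]
    fin_cases a <;> simp <;> omega

lemma keyIdentity (w : List (Fin 2)) :
    2 * subwordCount w [0, 1] + w.count 0 * w.count 0
      = 2 * ∑ i ∈ Finset.range w.length, (w.take i).count 0 + w.count 0 := by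
  induction w using List.reverseRecOn with
  | nil => simp [swc_eq]
  | append_singleton l c ih =>
    rw [f_append]
    have hf : subwordCount [c] [0, 1] = 0 := by fin_cases c <;> decide
    have hlen : (l ++ [c]).length = l.length + 1 := by simp
    rw [hlen, Finset.sum_range_succ,
      Finset.sum_congr rfl (fun i hi => by
        rw [List.take_append_of_le_length (le_of_lt (Finset.mem_range.mp hi))]),
      show (l ++ [c]).take l.length = l from List.take_left]
    fin_cases c <;>
      simp [show subwordCount [(0 : Fin 2)] [0, 1] = 0 from by decide,
        show subwordCount [(1 : Fin 2)] [0, 1] = 0 from by decide] <;>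
      nlinarith [ih]


/-- The key computation in the proof of Theorem 25: for a primitive word `w` over
`{a, b} = Fin 2` of length `n`, twice the sum over the cyclic shifts `w_i` of `|w_i|_{ab}`
equals `n · |w|_a · |w|_b`. -/
theorem stmt_12 (w : List (Fin 2))
    (hprim : ∀ (v : List (Fin 2)) (k : ℕ), 2 ≤ k → w ≠ (List.replicate k v).flatten) :
    2 * ∑ i ∈ Finset.range w.length, subwordCount (w.rotate i) [0, 1] =
      w.length * w.count 0 * w.count 1 := by
  clear hprim
  -- notation
  set n := w.length with hn
  set A := w.count 0 with hA
  set B := w.count 1 with hB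
  set fw := subwordCount w [0, 1] with hfw
  set X := ∑ i ∈ Finset.range n, subwordCount (w.rotate i) [0, 1] with hX
  set P := ∑ i ∈ Finset.range n, (w.take i).count 0 with hP
  set Q := ∑ i ∈ Finset.range n, (w.take i).count 1 with hQ
  set T := ∑ i ∈ Finset.range n, (w.take i).count 0 * (w.take i).count 1 with hT
  set U := ∑ i ∈ Finset.range n, (w.take i).count 0 * (w.drop i).count 1 with hU
  set V := ∑ i ∈ Finset.range n, (w.drop i).count 0 * (w.take i).count 1 with hV
  -- splitting counts
  have hsplit0 : ∀ i : ℕ, (w.take i).count 0 + (w.drop i).count 0 = A := by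
    intro i; rw [hA, ← List.count_append, List.take_append_drop]
  have hsplit1 : ∀ i : ℕ, (w.take i).count 1 + (w.drop i).count 1 = B := by
    intro i; rw [hB, ← List.count_append, List.take_append_drop]
  -- E1
  have per : ∀ i ∈ Finset.range n,
      subwordCount (w.rotate i) [0, 1] + (w.take i).count 0 * (w.drop i).count 1
        = fw + (w.drop i).count 0 * (w.take i).count 1 := by
    intro i hi
    have hin : i ≤ n := le_of_lt (Finset.mem_range.mp hi)
    rw [List.rotate_eq_drop_append_take hin, f_append]
    have hfw2 : fw = subwordCount (w.take i ++ w.drop i) [0, 1] := by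
      rw [List.take_append_drop]
    rw [hfw2, f_append]
    ring
  have e1 : X + U = n * fw + V := by
    calc X + U = ∑ i ∈ Finset.range n,
          (subwordCount (w.rotate i) [0, 1] + (w.take i).count 0 * (w.drop i).count 1) :=
            Finset.sum_add_distrib.symm
      _ = ∑ i ∈ Finset.range n, (fw + (w.drop i).count 0 * (w.take i).count 1) :=
            Finset.sum_congr rfl per
      _ = n * fw + V := by
            rw [Finset.sum_add_distrib, Finset.sum_const, Finset.card_range, smul_eq_mul]
  -- E2
  have e2 : U + T = P * B := by
    rw [hU, hT, hP, ← Finset.sum_add_distrib, Finset.sum_mul]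
    refine Finset.sum_congr rfl (fun i _ => ?_)
    rw [← hsplit1 i]; ring
  -- E3
  have e3 : V + T = Q * A := by
    rw [hV, hT, hQ, ← Finset.sum_add_distrib, Finset.sum_mul]
    refine Finset.sum_congr rfl (fun i _ => ?_)
    rw [← hsplit0 i]; ring
  -- E4
  have e4 : 2 * fw + A * A = 2 * P + A := keyIdentity w
  -- E5
  have e5 : 2 * (P + Q) = n * (n - 1) := by
    rw [hP, hQ, ← Finset.sum_add_distrib, ← Finset.sum_range_id_mul_two n, Finset.sum_congr rfl
      (fun i hi => ?_)]
    · ring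
    · rw [count01, List.length_take]
      exact min_eq_left (le_of_lt (Finset.mem_range.mp hi))
  -- E6
  have e6 : A + B = n := count01 w
  -- conclude
  have hn1 : n - 1 + 1 = n ∨ n = 0 := by omega
  rcases hn1 with h | h
  · zify [show (1:ℕ) ≤ n by omega] at e5
    zify at e1 e2 e3 e4 e6 ⊢
    linear_combination (2:ℤ) * e1 - 2 * e2 + 2 * e3 + (n:ℤ) * e4 + (A:ℤ) * e5
      - (2 * (P:ℤ) + (n:ℤ) * (A:ℤ)) * e6
  · rw [hX, hn, h] at *
    simp [h]
end

section
/- Let Σ = {a < b} be the binary ordered alphabet and u, v ∈ Σ*. Then Ψ_Σ([uv]) = Ψ_Σ([u])·Ψ_Σ([v]) if and only if |u|_a·|v|_b = |v|_a·|u|_b. -/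
namespace Stmt13Aux

/-- number of `ab` scattered subwords -/
def cab : List (Fin 2) → ℕ
  | [] => 0
  | c :: t => (if c = 0 then t.count 1 else 0) + cab t

def pw : List (Fin 2) → ℕ
  | [] => 0
  | c :: t => (if c = 0 then t.length else 0) + pw t

def qw : List (Fin 2) → ℕ
  | [] => 0
  | c :: t => (if c = 1 then t.length else 0) + qw t

def tri (a b c : ℚ) : Matrix (Fin 3) (Fin 3) ℚ := !![1, a, c; 0, 1, b; 0, 0, 1]

lemma fin2cases (c : Fin 2) : c = 0 ∨ c = 1 := by fin_cases c <;> simp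

lemma count_add (w : List (Fin 2)) : w.count 0 + w.count 1 = w.length := by
  induction w with
  | nil => simp
  | cons c t ih =>
    rcases fin2cases c with rfl | rfl <;> simp [List.count_cons] <;> omega

lemma cab_append (x y : List (Fin 2)) :
    cab (x ++ y) = cab x + cab y + x.count 0 * y.count 1 := by
  induction x with
  | nil => simp [cab]
  | cons c t ih =>
    rcases fin2cases c with rfl | rfl <;>
      simp [cab, ih, List.count_append, List.count_cons] <;> ring

lemma pw_append (x y : List (Fin 2)) :
    pw (x ++ y) = pw x + y.length * x.count 0 + pw y := by
  induction x with
  | nil => simp [pw]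
  | cons c t ih =>
    rcases fin2cases c with rfl | rfl <;>
      simp [pw, ih, List.count_cons, List.length_append] <;> ring

lemma qw_append (x y : List (Fin 2)) :
    qw (x ++ y) = qw x + y.length * x.count 1 + qw y := by
  induction x with
  | nil => simp [qw]
  | cons c t ih =>
    rcases fin2cases c with rfl | rfl <;>
      simp [qw, ih, List.count_cons, List.length_append] <;> ring

lemma pq_sum (w : List (Fin 2)) :
    2 * ((pw w : ℚ) + (qw w : ℚ)) = (w.length : ℚ) * ((w.length : ℚ) - 1) := by
  induction w with
  | nil => simp [pw, qw]
  | cons c t ih =>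
    rcases fin2cases c with rfl | rfl <;>
      · simp only [pw, qw, List.length_cons]
        push_cast
        linear_combination ih

lemma sum_take0 (w : List (Fin 2)) :
    ∑ j ∈ Finset.range w.length, ((w.take j).count 0) = pw w := by
  induction w with
  | nil => simp [pw]
  | cons c t ih =>
    rw [List.length_cons, Finset.sum_range_succ']
    simp only [List.take_succ_cons, List.count_cons, List.take_zero]
    rcases fin2cases c with rfl | rfl <;>
      simp [pw, Finset.sum_add_distrib, ih] <;> omega

lemma sum_take1 (w : List (Fin 2)) :
    ∑ j ∈ Finset.range w.length, ((w.take j).count 1) = qw w := by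
  induction w with
  | nil => simp [qw]
  | cons c t ih =>
    rw [List.length_cons, Finset.sum_range_succ']
    simp only [List.take_succ_cons, List.count_cons, List.take_zero]
    rcases fin2cases c with rfl | rfl <;>
      simp [qw, Finset.sum_add_distrib, ih] <;> omega

lemma cab_rotate (w : List (Fin 2)) {j : ℕ} (hj : j < w.length) :
    (cab (w.rotate j) : ℚ) = (cab w : ℚ)
      + (w.count 0 : ℚ) * ((w.take j).count 1 : ℚ)
      - (w.count 1 : ℚ) * ((w.take j).count 0 : ℚ) := by
  have hrot : w.rotate j = w.drop j ++ w.take j :=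
    List.rotate_eq_drop_append_take hj.le
  have hw : w.take j ++ w.drop j = w := List.take_append_drop j w
  have hc0 : w.count 0 = (w.take j).count 0 + (w.drop j).count 0 := by
    rw [← hw, List.count_append]; simp [hw]
  have hc1 : w.count 1 = (w.take j).count 1 + (w.drop j).count 1 := by
    rw [← hw, List.count_append]; simp [hw]
  have hcw : cab w = cab (w.take j) + cab (w.drop j)
      + (w.take j).count 0 * (w.drop j).count 1 := by
    rw [← hw, cab_append]; simp [hw]
  rw [hrot, cab_append, hcw, hc0, hc1]
  push_cast
  ring

/-- the sum of `cab` over all rotations -/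
lemma F_formula (w : List (Fin 2)) :
    ∑ j ∈ Finset.range w.length, (cab (w.rotate j) : ℚ)
      = (w.length : ℚ) * (cab w : ℚ)
        + (w.count 0 : ℚ) * (qw w : ℚ) - (w.count 1 : ℚ) * (pw w : ℚ) := by
  rw [Finset.sum_congr rfl (fun j hj => cab_rotate w (Finset.mem_range.mp hj))]
  rw [Finset.sum_sub_distrib, Finset.sum_add_distrib, Finset.sum_const,
    ← Finset.mul_sum, ← Finset.mul_sum]
  have h0 : ∑ j ∈ Finset.range w.length, ((w.take j).count 0 : ℚ) = (pw w : ℚ) := by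
    rw [← Nat.cast_sum]; exact_mod_cast congrArg (Nat.cast : ℕ → ℚ) (sum_take0 w)
  have h1 : ∑ j ∈ Finset.range w.length, ((w.take j).count 1 : ℚ) = (qw w : ℚ) := by
    rw [← Nat.cast_sum]; exact_mod_cast congrArg (Nat.cast : ℕ → ℚ) (sum_take1 w)
  rw [h0, h1, nsmul_eq_mul, Finset.card_range]

lemma tri_mul (a b c a' b' c' : ℚ) :
    tri a b c * tri a' b' c' = tri (a + a') (b + b') (c + c' + a * b') := by
  ext i j
  fin_cases i <;> fin_cases j <;>
    simp [tri, Matrix.mul_apply, Fin.sum_univ_three, Matrix.vecHead, Matrix.vecTail] <;> ring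

lemma tri_eq_iff (a b c c' : ℚ) : tri a b c = tri a b c' ↔ c = c' := by
  constructor
  · intro h
    have := congrFun (congrFun h 0) 2
    simpa [tri] using this
  · rintro rfl; rfl

lemma letter0_mul (a b g : ℚ) :
    parikhLetter (0 : Fin 2) * tri a b g = tri (a + 1) b (g + b) := by
  have h1 : ((0 : Fin 2).castSucc : Fin 3) = 0 := rfl
  have h2 : ((0 : Fin 2).succ : Fin 3) = 1 := rfl
  ext i j
  fin_cases i <;> fin_cases j <;>
    simp [parikhLetter, tri, Matrix.mul_apply, Fin.sum_univ_three, h1, h2,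
      Matrix.single, Matrix.one_apply, Matrix.vecHead, Matrix.vecTail]

lemma letter1_mul (a b g : ℚ) :
    parikhLetter (1 : Fin 2) * tri a b g = tri a (b + 1) g := by
  have h1 : ((1 : Fin 2).castSucc : Fin 3) = 1 := rfl
  have h2 : ((1 : Fin 2).succ : Fin 3) = 2 := rfl
  ext i j
  fin_cases i <;> fin_cases j <;>
    simp [parikhLetter, tri, Matrix.mul_apply, Fin.sum_univ_three, h1, h2,
      Matrix.single, Matrix.one_apply, Matrix.vecHead, Matrix.vecTail]

lemma parikh_eq (w : List (Fin 2)) :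
    parikhMatrix w = tri (w.count 0) (w.count 1) (cab w) := by
  induction w with
  | nil =>
    show (1 : Matrix (Fin 3) (Fin 3) ℚ) = _
    ext i j
    fin_cases i <;> fin_cases j <;>
      simp [tri, Matrix.one_apply, cab, Matrix.vecHead, Matrix.vecTail]
  | cons c t ih =>
    have hstep : parikhMatrix (c :: t) = parikhLetter c * parikhMatrix t := by
      simp [parikhMatrix]
    rw [hstep, ih]
    rcases fin2cases c with rfl | rfl
    · rw [letter0_mul]
      have e0 : (((0 : Fin 2) :: t).count 0 : ℚ) = (t.count 0 : ℚ) + 1 := by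
        simp [List.count_cons]
      have e1 : (((0 : Fin 2) :: t).count 1 : ℚ) = (t.count 1 : ℚ) := by
        simp [List.count_cons]
      have e2 : (cab ((0 : Fin 2) :: t) : ℚ) = (cab t : ℚ) + (t.count 1 : ℚ) := by
        show ((if (0 : Fin 2) = 0 then t.count 1 else 0) + cab t : ℕ) = (_ : ℚ)
        push_cast
        ring
      rw [e0, e1, e2]
    · rw [letter1_mul]
      have e0 : (((1 : Fin 2) :: t).count 0 : ℚ) = (t.count 0 : ℚ) := by
        simp [List.count_cons]
      have e1 : (((1 : Fin 2) :: t).count 1 : ℚ) = (t.count 1 : ℚ) + 1 := by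
        simp [List.count_cons]
      have e2 : (cab ((1 : Fin 2) :: t) : ℚ) = (cab t : ℚ) := by
        show ((if (1 : Fin 2) = 0 then t.count 1 else 0) + cab t : ℕ) = (_ : ℚ)
        norm_num
      rw [e0, e1, e2]

lemma conj_eq {α : Type*} [DecidableEq α] (w : List α) (hw : w ≠ []) :
    conjClass w = (Finset.range w.length).image w.rotate := by
  have h0 : 0 < w.length := List.length_pos_iff.mpr hw
  rw [conjClass, Finset.insert_eq_self, Finset.mem_image]
  exact ⟨0, Finset.mem_range.mpr h0, w.rotate_zero⟩

lemma fiber_card {α : Type*} [DecidableEq α] (w : List α) (h0 : 0 < w.length)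
    {i : ℕ} (hi : i < w.length) :
    ((Finset.range w.length).filter (fun j => w.rotate j = w.rotate i)).card
      = ((Finset.range w.length).filter (fun j => w.rotate j = w)).card := by
  set n := w.length with hn
  apply Finset.card_bij' (i := fun j _ => (j + (n - i)) % n) (j := fun t _ => (t + i) % n)
  · intro j hj
    rw [Finset.mem_filter, Finset.mem_range] at hj ⊢
    refine ⟨Nat.mod_lt _ h0, ?_⟩
    rw [List.rotate_mod, ← List.rotate_rotate, hj.2, List.rotate_rotate]
    have : i + (n - i) = n := by omega
    rw [this, hn, List.rotate_length]
  · intro t ht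
    rw [Finset.mem_filter, Finset.mem_range] at ht ⊢
    refine ⟨Nat.mod_lt _ h0, ?_⟩
    rw [List.rotate_mod, ← List.rotate_rotate, ht.2]
  · intro j hj
    rw [Finset.mem_filter, Finset.mem_range] at hj
    rw [Nat.mod_add_mod]
    have : j + (n - i) + i = j + n := by omega
    rw [this, Nat.add_mod_right, Nat.mod_eq_of_lt hj.1]
  · intro t ht
    rw [Finset.mem_filter, Finset.mem_range] at ht
    rw [Nat.mod_add_mod]
    have : t + i + (n - i) = t + n := by omega
    rw [this, Nat.add_mod_right, Nat.mod_eq_of_lt ht.1]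

lemma avg {α : Type*} [DecidableEq α] (w : List α) (hw : w ≠ []) (f : List α → ℚ) :
    (((conjClass w).card : ℚ))⁻¹ * ∑ u ∈ conjClass w, f u
      = ((w.length : ℚ))⁻¹ * ∑ j ∈ Finset.range w.length, f (w.rotate j) := by
  have h0 : 0 < w.length := List.length_pos_iff.mpr hw
  set h := ((Finset.range w.length).filter (fun j => w.rotate j = w)).card with hh
  have hfib : ∀ u ∈ (Finset.range w.length).image w.rotate,
      ((Finset.range w.length).filter (fun j => w.rotate j = u)).card = h := by
    intro u hu
    rw [Finset.mem_image] at hu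
    obtain ⟨i, hi, rfl⟩ := hu
    exact fiber_card w h0 (Finset.mem_range.mp hi)
  have hsum : ∑ j ∈ Finset.range w.length, f (w.rotate j)
      = (h : ℚ) * ∑ u ∈ (Finset.range w.length).image w.rotate, f u := by
    rw [Finset.sum_comp f w.rotate]
    rw [Finset.sum_congr rfl (fun u hu => by rw [hfib u hu])]
    rw [← Finset.smul_sum, nsmul_eq_mul]
  have hcard : w.length = h * ((Finset.range w.length).image w.rotate).card := by
    have h2 := Finset.card_eq_sum_card_image w.rotate (Finset.range w.length)
    rw [Finset.card_range] at h2
    conv_lhs => rw [h2]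
    rw [Finset.sum_congr rfl (fun u hu => hfib u hu), Finset.sum_const, smul_eq_mul, mul_comm]
  have hhne : (h : ℚ) ≠ 0 := by
    have hmem : 0 ∈ (Finset.range w.length).filter (fun j => w.rotate j = w) := by
      simp [Finset.mem_filter, h0]
    exact Nat.cast_ne_zero.mpr (Finset.card_pos.mpr ⟨0, hmem⟩).ne'
  have hcne : (((Finset.range w.length).image w.rotate).card : ℚ) ≠ 0 := by
    have : ((Finset.range w.length).image w.rotate).Nonempty :=
      ⟨w, Finset.mem_image.mpr ⟨0, Finset.mem_range.mpr h0, w.rotate_zero⟩⟩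
    exact Nat.cast_ne_zero.mpr (Finset.card_pos.mpr this).ne'
  have hnq : ((w.length : ℕ) : ℚ)
      = (h : ℚ) * (((Finset.range w.length).image w.rotate).card : ℚ) := by
    exact_mod_cast congrArg (Nat.cast : ℕ → ℚ) hcard
  rw [conj_eq w hw, hsum, hnq]
  field_simp

lemma circ_tri (w : List (Fin 2)) (hw : w ≠ []) :
    circParikh w = tri (w.count 0) (w.count 1)
      ((w.length : ℚ)⁻¹ * ∑ j ∈ Finset.range w.length, (cab (w.rotate j) : ℚ)) := by
  have hmem : ∀ u ∈ conjClass w, parikhMatrix u = tri (w.count 0) (w.count 1) (cab u) := by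
    intro x hx
    have hperm : x.Perm w := by
      rw [conjClass, Finset.mem_insert, Finset.mem_image] at hx
      rcases hx with rfl | ⟨j, _, rfl⟩
      · exact List.Perm.refl _
      · exact w.rotate_perm j
    rw [parikh_eq, hperm.count_eq 0, hperm.count_eq 1]
  have hc : ((conjClass w).card : ℚ) ≠ 0 := by
    have : (conjClass w).Nonempty := ⟨w, Finset.mem_insert_self _ _⟩
    exact Nat.cast_ne_zero.mpr (Finset.card_pos.mpr this).ne'
  have hn : ((w.length : ℕ) : ℚ) ≠ 0 :=
    Nat.cast_ne_zero.mpr (List.length_pos_iff.mpr hw).ne'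
  have havg := avg w hw (fun u => (cab u : ℚ))
  unfold circParikh
  rw [Finset.sum_congr rfl hmem]
  ext i j
  rw [Matrix.smul_apply, Matrix.sum_apply]
  fin_cases i <;> fin_cases j <;>
    simp [tri, Finset.sum_const, nsmul_eq_mul, smul_eq_mul, hc] <;>
    (field_simp at havg ⊢; linarith [havg])

lemma circ_nil : circParikh ([] : List (Fin 2)) = 1 := by
  unfold circParikh conjClass
  simp [parikhMatrix]

lemma key (m k au bu av bv pu qu pv qv cu cv : ℚ)
    (hm : m ≠ 0) (hk : k ≠ 0) (hmk : m + k ≠ 0)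
    (hu : au + bu = m) (hv : av + bv = k)
    (hqu : 2 * (pu + qu) = m * (m - 1)) (hqv : 2 * (pv + qv) = k * (k - 1)) :
    (m + k)⁻¹ * ((m + k) * (cu + cv + au * bv) + (au + av) * (qu + k * bu + qv)
        - (bu + bv) * (pu + k * au + pv))
      - (m⁻¹ * (m * cu + au * qu - bu * pu) + k⁻¹ * (k * cv + av * qv - bv * pv)
        + au * bv)
    = (av * bu - au * bv) / 2 := by
  have h1 : bu = m - au := by linarith
  have h2 : bv = k - av := by linarith
  subst h1 h2
  have h3 : qu = m * (m - 1) / 2 - pu := by linarith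
  have h4 : qv = k * (k - 1) / 2 - pv := by linarith
  subst h3 h4
  field_simp
  ring

end Stmt13Aux

open Stmt13Aux in
/-- Corollary 28: for words `u, v` over `{a < b} = Fin 2`,
`Ψ_Σ([uv]) = Ψ_Σ([u]) · Ψ_Σ([v])` if and only if `|u|_a|v|_b = |v|_a|u|_b`
(the weak ratio property). -/
theorem stmt_13 (u v : List (Fin 2)) :
    circParikh (u ++ v) = circParikh u * circParikh v ↔
      u.count 0 * v.count 1 = v.count 0 * u.count 1 := by
  by_cases hu : u = []
  · subst hu
    rw [List.nil_append, circ_nil, one_mul]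
    simp
  by_cases hv : v = []
  · subst hv
    rw [List.append_nil, circ_nil, mul_one]
    simp
  have huv : u ++ v ≠ [] := by simp [hu]
  have hm : ((u.length : ℕ) : ℚ) ≠ 0 :=
    Nat.cast_ne_zero.mpr (List.length_pos_iff.mpr hu).ne'
  have hk : ((v.length : ℕ) : ℚ) ≠ 0 :=
    Nat.cast_ne_zero.mpr (List.length_pos_iff.mpr hv).ne'
  have hmk : ((u.length : ℚ) + (v.length : ℚ)) ≠ 0 := by positivity
  rw [circ_tri u hu, circ_tri v hv, circ_tri (u ++ v) huv, tri_mul]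
  have ha : (((u ++ v).count 0 : ℕ) : ℚ) = (u.count 0 : ℚ) + (v.count 0 : ℚ) := by
    push_cast [List.count_append]; ring
  have hb : (((u ++ v).count 1 : ℕ) : ℚ) = (u.count 1 : ℚ) + (v.count 1 : ℚ) := by
    push_cast [List.count_append]; ring
  have hlen : (((u ++ v).length : ℕ) : ℚ) = (u.length : ℚ) + (v.length : ℚ) := by
    push_cast [List.length_append]; ring
  rw [ha, hb, hlen, tri_eq_iff]
  have e1 : ∑ j ∈ Finset.range (u ++ v).length, (cab ((u ++ v).rotate j) : ℚ)
      = ((u.length : ℚ) + (v.length : ℚ))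
          * ((cab u : ℚ) + (cab v : ℚ) + (u.count 0 : ℚ) * (v.count 1 : ℚ))
        + ((u.count 0 : ℚ) + (v.count 0 : ℚ))
          * ((qw u : ℚ) + (v.length : ℚ) * (u.count 1 : ℚ) + (qw v : ℚ))
        - ((u.count 1 : ℚ) + (v.count 1 : ℚ))
          * ((pw u : ℚ) + (v.length : ℚ) * (u.count 0 : ℚ) + (pw v : ℚ)) := by
    rw [F_formula]
    push_cast [List.count_append, List.length_append, cab_append, pw_append, qw_append]
    ring
  rw [e1, F_formula u, F_formula v]
  have hcu : (u.count 0 : ℚ) + (u.count 1 : ℚ) = (u.length : ℚ) := by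
    exact_mod_cast congrArg (Nat.cast : ℕ → ℚ) (count_add u)
  have hcv : (v.count 0 : ℚ) + (v.count 1 : ℚ) = (v.length : ℚ) := by
    exact_mod_cast congrArg (Nat.cast : ℕ → ℚ) (count_add v)
  have hkey := key (u.length : ℚ) (v.length : ℚ) (u.count 0 : ℚ) (u.count 1 : ℚ)
    (v.count 0 : ℚ) (v.count 1 : ℚ) (pw u : ℚ) (qw u : ℚ) (pw v : ℚ) (qw v : ℚ)
    (cab u : ℚ) (cab v : ℚ) hm hk hmk hcu hcv (pq_sum u) (pq_sum v)
  constructor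
  · intro heq
    have hz : ((v.count 0 : ℚ) * (u.count 1 : ℚ) - (u.count 0 : ℚ) * (v.count 1 : ℚ)) / 2
        = 0 := by rw [← hkey]; linarith
    have : (u.count 0 : ℚ) * (v.count 1 : ℚ) = (v.count 0 : ℚ) * (u.count 1 : ℚ) := by
      linarith
    exact_mod_cast this
  · intro heq
    have hq : (u.count 0 : ℚ) * (v.count 1 : ℚ) = (v.count 0 : ℚ) * (u.count 1 : ℚ) := by
      exact_mod_cast heq
    linarith [hkey]
end

section
/- Let Σ = {a < b} be the binary ordered alphabet and u, v ∈ Σ*. Then the Parikh matrices of the circular words [u] and [v] commute, i.e., Ψ_Σ([u])·Ψ_Σ([v]) = Ψ_Σ([v])·Ψ_Σ([u]), if and only if |u|_a·|v|_b = |v|_a·|u|_b. -/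
def M3 (p q c : ℚ) : Matrix (Fin 3) (Fin 3) ℚ := !![1,p,c;0,1,q;0,0,1]

lemma M3_congr {a b c a' b' c' : ℚ} (h1 : a = a') (h2 : b = b') (h3 : c = c') :
    M3 a b c = M3 a' b' c' := by rw [h1, h2, h3]

lemma M3_mul (p q c p' q' c' : ℚ) :
    M3 p q c * M3 p' q' c' = M3 (p+p') (q+q') (c+c'+p*q') := by
  ext i j
  fin_cases i <;> fin_cases j <;>
    simp [M3, Matrix.mul_apply, Fin.sum_univ_three, Matrix.vecHead, Matrix.vecTail] <;> ring

lemma M3_apply02 (p q c : ℚ) : M3 p q c 0 2 = c := by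
  simp [M3, Matrix.vecHead, Matrix.vecTail]

lemma pl0 : parikhLetter (0 : Fin 2) = M3 1 0 0 := by
  ext i j
  fin_cases i <;> fin_cases j <;>
    simp [M3, parikhLetter, Matrix.single, Matrix.one_apply, Fin.ext_iff, Matrix.vecHead, Matrix.vecTail]

lemma pl1 : parikhLetter (1 : Fin 2) = M3 0 1 0 := by
  ext i j
  fin_cases i <;> fin_cases j <;>
    simp [M3, parikhLetter, Matrix.single, Matrix.one_apply, Fin.ext_iff, Matrix.vecHead, Matrix.vecTail]

lemma M3_one : (1 : Matrix (Fin 3) (Fin 3) ℚ) = M3 0 0 0 := by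
  ext i j
  fin_cases i <;> fin_cases j <;>
    simp [M3, Matrix.one_apply, Matrix.vecHead, Matrix.vecTail]

lemma conj_perm {α : Type*} [DecidableEq α] {w x : List α} (hx : x ∈ conjClass w) :
    x.Perm w := by
  rcases Finset.mem_insert.mp hx with h | h
  · subst h; exact List.Perm.refl _
  · obtain ⟨n, -, rfl⟩ := Finset.mem_image.mp h
    exact List.rotate_perm w n

lemma parikh_form (w : List (Fin 2)) :
    ∃ c, parikhMatrix w = M3 (w.count 0) (w.count 1) c := by
  induction w with
  | nil => exact ⟨0, by simpa [parikhMatrix] using M3_one⟩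
  | cons x w ih =>
    obtain ⟨c, hc⟩ := ih
    have hm : parikhMatrix (x :: w) = parikhLetter x * parikhMatrix w := by
      simp [parikhMatrix]
    fin_cases x <;> simp only [Fin.mk_zero, Fin.mk_one] at hm ⊢
    · refine ⟨c + w.count 1, ?_⟩
      rw [hm, pl0, hc, M3_mul]
      apply M3_congr <;> simp [List.count_cons] <;> push_cast <;> ring
    · refine ⟨c, ?_⟩
      rw [hm, pl1, hc, M3_mul]
      apply M3_congr <;> simp [List.count_cons] <;> push_cast <;> ring

lemma smul_sum_M3 {α : Type*} (S : Finset α) (hS : S.Nonempty) (p q : ℚ) (f : α → ℚ) :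
    ((S.card : ℚ))⁻¹ • ∑ x ∈ S, M3 p q (f x) =
      M3 p q ((S.card : ℚ)⁻¹ * ∑ x ∈ S, f x) := by
  have hn : (S.card : ℚ) ≠ 0 := by
    exact_mod_cast Nat.cast_ne_zero.mpr (Finset.card_ne_zero_of_mem hS.choose_spec)
  ext i j
  rw [Matrix.smul_apply, Matrix.sum_apply]
  fin_cases i <;> fin_cases j <;>
    simp [M3, Matrix.vecHead, Matrix.vecTail, Finset.sum_const, nsmul_eq_mul,
      Finset.mul_sum, inv_mul_cancel₀ hn] <;>
    field_simp

lemma circ_form (w : List (Fin 2)) :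
    ∃ c, circParikh w = M3 (w.count 0) (w.count 1) c := by
  refine ⟨((conjClass w).card : ℚ)⁻¹ * ∑ x ∈ conjClass w, parikhMatrix x 0 2, ?_⟩
  have key : ∀ x ∈ conjClass w,
      parikhMatrix x = M3 (w.count 0) (w.count 1) (parikhMatrix x 0 2) := by
    intro x hx
    obtain ⟨c, hc⟩ := parikh_form x
    have hperm := conj_perm hx
    rw [hc, M3_apply02, hperm.count_eq 0, hperm.count_eq 1]
  rw [circParikh, Finset.sum_congr rfl key]
  exact smul_sum_M3 _ ⟨w, Finset.mem_insert_self _ _⟩ _ _ _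

/-- Corollary 29: for words `u, v` over `{a < b} = Fin 2`, the Parikh matrices of the
circular words `[u]` and `[v]` commute if and only if `|u|_a|v|_b = |v|_a|u|_b`
(the weak ratio property). -/
theorem stmt_14 (u v : List (Fin 2)) :
    circParikh u * circParikh v = circParikh v * circParikh u ↔
      u.count 0 * v.count 1 = v.count 0 * u.count 1 := by
  obtain ⟨c, hc⟩ := circ_form u
  obtain ⟨c', hc'⟩ := circ_form v
  rw [hc, hc', M3_mul, M3_mul]
  constructor
  · intro h
    have h02 := congrArg (fun M => M 0 2) h
    simp only [M3_apply02] at h02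
    have : (u.count 0 : ℚ) * v.count 1 = (v.count 0 : ℚ) * u.count 1 := by linarith
    exact_mod_cast this
  · intro h
    have hq : (u.count 0 : ℚ) * v.count 1 = (v.count 0 : ℚ) * u.count 1 := by
      exact_mod_cast h
    apply M3_congr <;> [ring; ring; linarith]
end

section
/- Let Σ = {a, b, c} and suppose w = xαβyβα and w' = xβαyαβ for some distinct letters α, β ∈ Σ and words x, y ∈ Σ*. Then |[w]|_u = |[w']|_u for every slender Parikh word u over Σ of length at most 2 (i.e., for every u that is a single letter or a two-letter word with distinct letters). -/
namespace CircAux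

open List Finset

variable {A : Type*} [DecidableEq A]

lemma sc_eq_sublists' (w v : List A) : subwordCount w v = w.sublists'.count v := by
  unfold subwordCount
  exact (List.sublists_perm_sublists' w).countP_eq _

lemma sc_nil_left (v : List A) : subwordCount ([] : List A) v = if v = [] then 1 else 0 := by
  unfold subwordCount
  rcases eq_or_ne v [] with h | h <;> simp [h, List.count_cons]

lemma count_map_cons (L : List (List A)) (a : A) (t : List A) :
    (L.map (List.cons a)).count (a :: t) = L.count t := by
  simp only [List.count, List.countP_map]
  congr 1; funext s
  simp [Function.comp]

lemma sc_cons (a : A) (l v : List A) :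
    subwordCount (a :: l) v =
      subwordCount l v + (match v with
        | [] => 0
        | b :: t => if b = a then subwordCount l t else 0) := by
  rw [sc_eq_sublists', sc_eq_sublists', List.sublists'_cons, List.count_append]
  congr 1
  match v with
  | [] =>
    show _ = 0
    rw [List.count_eq_zero]
    simp only [List.mem_map]
    rintro ⟨s, -, hs⟩
    simp at hs
  | b :: t =>
    show _ = if b = a then subwordCount l t else 0
    rcases eq_or_ne b a with h | h
    · subst h
      rw [if_pos rfl, count_map_cons, sc_eq_sublists']
    · rw [if_neg h, List.count_eq_zero]
      simp only [List.mem_map]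
      rintro ⟨s, -, hs⟩
      injection hs with h1 _
      exact h h1.symm

lemma sc_nil (w : List A) : subwordCount w [] = 1 := by
  induction w with
  | nil => simp [sc_nil_left]
  | cons a l ih => rw [sc_cons]; simpa using ih

lemma sc_single (w : List A) (γ : A) : subwordCount w [γ] = w.count γ := by
  induction w with
  | nil => simp [sc_nil_left]
  | cons a l ih =>
    rw [sc_cons, List.count_cons]
    simp only [ih, sc_nil]
    rcases eq_or_ne γ a with h | h
    · simp [h]
    · simp [h, Ne.symm h]

lemma sc_pair_cons (a : A) (l : List A) (γ δ : A) :
    subwordCount (a :: l) [γ, δ] =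
      subwordCount l [γ, δ] + if γ = a then l.count δ else 0 := by
  rw [sc_cons]
  simp [sc_single]

lemma sc_pair_append (u v : List A) (γ δ : A) :
    subwordCount (u ++ v) [γ, δ] =
      subwordCount u [γ, δ] + subwordCount v [γ, δ] + u.count γ * v.count δ := by
  induction u with
  | nil => simp [sc_nil_left]
  | cons a l ih =>
    rw [List.cons_append, sc_pair_cons, sc_pair_cons, ih, List.count_append, List.count_cons]
    simp only [beq_iff_eq]
    rcases eq_or_ne γ a with h | h
    · subst h
      simp only [if_pos rfl, List.count_append, if_true]
      ring
    · simp only [if_neg h, if_neg (Ne.symm h)]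
      ring

lemma sc_short (w v : List A) (h : w.length < v.length) : subwordCount w v = 0 := by
  unfold subwordCount
  rw [List.count_eq_zero]
  intro hv
  exact absurd ((List.mem_sublists.mp hv).length_le) (by omega)

/-- The sum of the subword counts of `u` over all `|w|` rotations of `w`. -/
def Fsum (w u : List A) : ℕ := ∑ i ∈ Finset.range w.length, subwordCount (w.rotate i) u

lemma Fsum_rotate (w : List A) (k : ℕ) (u : List A) : Fsum (w.rotate k) u = Fsum w u := by
  unfold Fsum
  rw [List.length_rotate]
  rcases Nat.eq_zero_or_pos w.length with hn | hn
  · simp [hn]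
  have hk : k % w.length < w.length := Nat.mod_lt _ hn
  refine Finset.sum_nbij' (fun i => (k % w.length + i) % w.length)
    (fun j => (j + (w.length - k % w.length)) % w.length)
    (fun i _ => Finset.mem_range.mpr (Nat.mod_lt _ hn))
    (fun j _ => Finset.mem_range.mpr (Nat.mod_lt _ hn)) ?_ ?_ ?_
  · intro i hi
    have hi' : i < w.length := Finset.mem_range.mp hi
    rw [Nat.mod_add_mod,
      show k % w.length + i + (w.length - k % w.length) = i + w.length by omega,
      Nat.add_mod_right, Nat.mod_eq_of_lt hi']
  · intro j hj
    have hj' : j < w.length := Finset.mem_range.mp hj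
    rw [Nat.add_mod_mod,
      show k % w.length + (j + (w.length - k % w.length)) = j + w.length by omega,
      Nat.add_mod_right, Nat.mod_eq_of_lt hj']
  · intro i _
    rw [List.rotate_rotate, Nat.mod_add_mod, List.rotate_mod]

lemma fiber_const (w : List A) (k : ℕ) (hk : k < w.length) :
    #{i ∈ Finset.range w.length | w.rotate i = w.rotate k} =
      #{i ∈ Finset.range w.length | w.rotate i = w} := by
  have hn : 0 < w.length := by omega
  refine Finset.card_nbij' (fun i => (i + (w.length - k)) % w.length)
    (fun j => (j + k) % w.length) ?_ ?_ ?_ ?_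
  · intro i hi
    obtain ⟨hi1, hi2⟩ := Finset.mem_filter.mp hi
    have hi' : i < w.length := Finset.mem_range.mp hi1
    refine Finset.mem_filter.mpr ⟨Finset.mem_range.mpr (Nat.mod_lt _ hn), ?_⟩
    rw [List.rotate_mod, ← List.rotate_rotate, hi2, List.rotate_rotate,
      show k + (w.length - k) = w.length by omega, List.rotate_length]
  · intro j hj
    obtain ⟨hj1, hj2⟩ := Finset.mem_filter.mp hj
    refine Finset.mem_filter.mpr ⟨Finset.mem_range.mpr (Nat.mod_lt _ hn), ?_⟩
    rw [List.rotate_mod, ← List.rotate_rotate, hj2]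
  · intro i hi
    obtain ⟨hi1, -⟩ := Finset.mem_filter.mp hi
    have hi' : i < w.length := Finset.mem_range.mp hi1
    dsimp only
    rw [Nat.mod_add_mod, show i + (w.length - k) + k = i + w.length by omega,
      Nat.add_mod_right, Nat.mod_eq_of_lt hi']
  · intro j hj
    obtain ⟨hj1, -⟩ := Finset.mem_filter.mp hj
    have hj' : j < w.length := Finset.mem_range.mp hj1
    dsimp only
    rw [Nat.mod_add_mod, show j + k + (w.length - k) = j + w.length by omega,
      Nat.add_mod_right, Nat.mod_eq_of_lt hj']

lemma conjClass_eq (w : List A) (hw : w ≠ []) :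
    conjClass w = (Finset.range w.length).image w.rotate := by
  unfold conjClass
  refine Finset.insert_eq_self.mpr ?_
  exact Finset.mem_image.mpr ⟨0, Finset.mem_range.mpr (List.length_pos_iff.mpr hw), List.rotate_zero w⟩

lemma sum_rotates (w : List A) (hw : w ≠ []) (f : List A → ℚ) :
    ∑ i ∈ Finset.range w.length, f (w.rotate i) =
      #{i ∈ Finset.range w.length | w.rotate i = w} • ∑ v ∈ conjClass w, f v := by
  rw [conjClass_eq w hw, Finset.sum_comp f w.rotate, Finset.smul_sum]
  refine Finset.sum_congr rfl ?_
  intro v hv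
  obtain ⟨k, hk, rfl⟩ := Finset.mem_image.mp hv
  rw [fiber_const w k (Finset.mem_range.mp hk)]

lemma circ_eq (w : List A) (hw : w ≠ []) (u : List A) :
    circCount w u = (Fsum w u : ℚ) / (w.length : ℚ) := by
  have hn : 0 < w.length := List.length_pos_iff.mpr hw
  set m := #{i ∈ Finset.range w.length | w.rotate i = w} with hm
  have hm0 : 0 < m := Finset.card_pos.mpr
    ⟨0, Finset.mem_filter.mpr ⟨Finset.mem_range.mpr hn, List.rotate_zero w⟩⟩
  have h1 : (Fsum w u : ℚ) = (m : ℚ) * ∑ v ∈ conjClass w, (subwordCount v u : ℚ) := by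
    unfold Fsum
    push_cast
    rw [sum_rotates w hw (fun v => (subwordCount v u : ℚ)), nsmul_eq_mul]
  have h2 : (w.length : ℚ) = (m : ℚ) * ((conjClass w).card : ℚ) := by
    have h := sum_rotates w hw (fun _ => (1 : ℚ))
    simpa [nsmul_eq_mul] using h
  unfold circCount
  rw [h1, h2, mul_div_mul_left _ _ (by exact_mod_cast hm0.ne')]

lemma Fsum_append_pair (z : List A) (a b γ δ : A) :
    Fsum (z ++ [a, b]) [γ, δ] =
      (∑ i ∈ Finset.range (z.length + 1),
        (subwordCount (z.drop i) [γ, δ] + subwordCount (z.take i) [γ, δ]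
          + (z.drop i).count γ * (z.take i).count δ))
      + (z.length + 1) * subwordCount [a, b] [γ, δ]
      + [a, b].count γ * (∑ i ∈ Finset.range (z.length + 1), (z.take i).count δ)
      + [a, b].count δ * (∑ i ∈ Finset.range (z.length + 1), (z.drop i).count γ)
      + subwordCount z [γ, δ] + z.count γ * [a].count δ
      + [b].count γ * z.count δ + [b].count γ * [a].count δ := by
  unfold Fsum
  have hl : (z ++ [a, b]).length = (z.length + 1) + 1 := by simp
  rw [hl, Finset.sum_range_succ]
  have hlast : (z ++ [a, b]).rotate (z.length + 1) = [b] ++ (z ++ [a]) := by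
    rw [show z ++ [a, b] = (z ++ [a]) ++ [b] by simp,
      List.rotate_eq_drop_append_take (by simp),
      List.drop_left' (by simp), List.take_left' (by simp)]
  rw [hlast]
  have hmain : ∀ i ∈ Finset.range (z.length + 1),
      subwordCount ((z ++ [a, b]).rotate i) [γ, δ] =
        subwordCount (z.drop i) [γ, δ] + subwordCount (z.take i) [γ, δ]
          + (z.drop i).count γ * (z.take i).count δ
          + subwordCount [a, b] [γ, δ]
          + [a, b].count γ * (z.take i).count δ
          + [a, b].count δ * (z.drop i).count γ := by
    intro i hi
    have hi' : i ≤ z.length := by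
      have := Finset.mem_range.mp hi; omega
    rw [List.rotate_eq_drop_append_take
        (by simp only [List.length_append, List.length_cons, List.length_nil]; omega),
      List.drop_append_of_le_length hi', List.take_append_of_le_length hi',
      List.append_assoc, sc_pair_append, sc_pair_append, List.count_append]
    ring
  rw [Finset.sum_congr rfl hmain, sc_pair_append [b] (z ++ [a]), sc_pair_append z [a],
    sc_short [b] [γ, δ] (by simp), sc_short [a] [γ, δ] (by simp), List.count_append]
  simp only [Finset.sum_add_distrib, Finset.sum_const, Finset.card_range, smul_eq_mul,
    ← Finset.mul_sum]
  ring

lemma Fsum_append_comm (p q u : List A) : Fsum (p ++ q) u = Fsum (q ++ p) u := by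
  rw [show q ++ p = (p ++ q).rotate p.length by
    rw [List.rotate_eq_drop_append_take (by simp), List.drop_left, List.take_left],
    Fsum_rotate]

lemma Fsum_swap (z₁ z₂ : List A) (a b γ δ : A) (hlen : z₂.length = z₁.length)
    (hc : ∀ g : A, z₂.count g = z₁.count g) :
    Fsum (z₁ ++ [a, b]) [γ, δ] + Fsum (z₂ ++ [b, a]) [γ, δ] =
      Fsum (z₁ ++ [b, a]) [γ, δ] + Fsum (z₂ ++ [a, b]) [γ, δ] := by
  rw [Fsum_append_pair, Fsum_append_pair, Fsum_append_pair, Fsum_append_pair, hlen, hc γ, hc δ]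
  simp only [List.count_cons, List.count_nil]
  ring

end CircAux

open CircAux

/-- Lemma 32: if `w = xαβyβα` and `w' = xβαyαβ` for distinct letters `α, β` of
`{a, b, c} = Fin 3`, then `|[w]|_u = |[w']|_u` for every slender Parikh word `u`
of length at most 2. -/
theorem stmt_15 (α β : Fin 3) (hαβ : α ≠ β) (x y : List (Fin 3)) :
    ∀ u : List (Fin 3), u.length ≤ 2 → (∀ γ : Fin 3, u.count γ ≤ 1) →
      circCount (x ++ [α, β] ++ y ++ [β, α]) u =
        circCount (x ++ [β, α] ++ y ++ [α, β]) u := by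
  intro u hlen _
  have hne1 : x ++ [α, β] ++ y ++ [β, α] ≠ [] := by simp
  have hne2 : x ++ [β, α] ++ y ++ [α, β] ≠ [] := by simp
  rw [circ_eq _ hne1, circ_eq _ hne2]
  have hll : (x ++ [β, α] ++ y ++ [α, β]).length = (x ++ [α, β] ++ y ++ [β, α]).length := by
    simp
  rw [hll]
  suffices h : Fsum (x ++ [α, β] ++ y ++ [β, α]) u = Fsum (x ++ [β, α] ++ y ++ [α, β]) u by
    rw [h]
  match u with
  | [] =>
    have hF : ∀ w : List (Fin 3), Fsum w [] = w.length := by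
      intro w; unfold Fsum; simp [sc_nil]
    rw [hF, hF, hll]
  | [γ] =>
    have hF : ∀ w : List (Fin 3), Fsum w [γ] = w.length * w.count γ := by
      intro w
      unfold Fsum
      rw [Finset.sum_congr rfl fun i _ => by
        rw [sc_single, (List.rotate_perm w i).count_eq]]
      simp [mul_comm]
    rw [hF, hF, hll]
    have hcc : (x ++ [β, α] ++ y ++ [α, β]).count γ = (x ++ [α, β] ++ y ++ [β, α]).count γ := by
      simp only [List.count_append]
      omega
    rw [hcc]
  | [γ, δ] =>
    have h1 : Fsum (x ++ [α, β] ++ y ++ [β, α]) [γ, δ] =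
        Fsum ((y ++ [β, α] ++ x) ++ [α, β]) [γ, δ] := by
      rw [List.append_assoc (x ++ [α, β]) y [β, α], Fsum_append_comm, ← List.append_assoc]
    have h2 : Fsum ((y ++ [β, α] ++ x) ++ [β, α]) [γ, δ] =
        Fsum ((x ++ [β, α] ++ y) ++ [β, α]) [γ, δ] := by
      rw [List.append_assoc (y ++ [β, α]) x [β, α], Fsum_append_comm, ← List.append_assoc]
    have hswap := Fsum_swap (y ++ [β, α] ++ x) (x ++ [β, α] ++ y) α β γ δ
      (by simp; omega) (by intro g; simp only [List.count_append]; omega)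
    rw [h1, show x ++ [β, α] ++ y ++ [α, β] = (x ++ [β, α] ++ y) ++ [α, β] from rfl]
    omega
  | _ :: _ :: _ :: _ => simp at hlen
end

section
/- Let Σ = {a < b < c} and suppose w = xacyca and w' = xcayac for some x, y ∈ Σ*. Then the circular words [w] and [w'] are M-equivalent (i.e., Ψ_Σ([w]) = Ψ_Σ([w'])) if and only if |y|_b·(|x|_a − |x|_c) = |x|_b·(|y|_a − |y|_c). -/
/-! ### Auxiliary machinery -/

def uni (a b c p q r : ℚ) : Matrix (Fin 4) (Fin 4) ℚ :=
  !![1, a, p, r; 0, 1, b, q; 0, 0, 1, c; 0, 0, 0, 1]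

lemma uni_mul (a b c p q r a' b' c' p' q' r' : ℚ) :
    uni a b c p q r * uni a' b' c' p' q' r' =
      uni (a + a') (b + b') (c + c') (p + p' + a * b') (q + q' + b * c')
        (r + r' + a * q' + p * c') := by
  unfold uni
  ext i j
  fin_cases i <;> fin_cases j <;>
    simp [Matrix.mul_apply, Fin.sum_univ_succ, Matrix.vecHead, Matrix.vecTail] <;> ring

lemma letter0 : parikhLetter (0 : Fin 3) = uni 1 0 0 0 0 0 := by
  unfold parikhLetter uni
  ext i j
  fin_cases i <;> fin_cases j <;>
    norm_num [Matrix.single, Matrix.one_apply, Matrix.add_apply, Fin.ext_iff,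
      Matrix.vecHead, Matrix.vecTail]

lemma letter1 : parikhLetter (1 : Fin 3) = uni 0 1 0 0 0 0 := by
  unfold parikhLetter uni
  ext i j
  fin_cases i <;> fin_cases j <;>
    norm_num [Matrix.single, Matrix.one_apply, Matrix.add_apply, Fin.ext_iff,
      Matrix.vecHead, Matrix.vecTail]

lemma letter2 : parikhLetter (2 : Fin 3) = uni 0 0 1 0 0 0 := by
  unfold parikhLetter uni
  ext i j
  fin_cases i <;> fin_cases j <;>
    norm_num [Matrix.single, Matrix.one_apply, Matrix.add_apply, Fin.ext_iff,
      Matrix.vecHead, Matrix.vecTail]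

lemma uni_one : (1 : Matrix (Fin 4) (Fin 4) ℚ) = uni 0 0 0 0 0 0 := by
  unfold uni
  ext i j
  fin_cases i <;> fin_cases j <;>
    norm_num [Matrix.one_apply, Fin.ext_iff, Matrix.vecHead, Matrix.vecTail]

lemma parikh_nil : parikhMatrix ([] : List (Fin 3)) = 1 := rfl

lemma parikh_cons (h : Fin 3) (t : List (Fin 3)) :
    parikhMatrix (h :: t) = parikhLetter h * parikhMatrix t := by
  simp [parikhMatrix]

lemma parikh_append (u v : List (Fin 3)) :
    parikhMatrix (u ++ v) = parikhMatrix u * parikhMatrix v := by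
  simp [parikhMatrix]

lemma fin3_0 (h : 0 < 3) : (⟨0, h⟩ : Fin 3) = 0 := rfl
lemma fin3_1 (h : 1 < 3) : (⟨1, h⟩ : Fin 3) = 1 := rfl
lemma fin3_2 (h : 2 < 3) : (⟨2, h⟩ : Fin 3) = 2 := rfl

lemma parikh_uni (u : List (Fin 3)) : ∃ p q r,
    parikhMatrix u = uni (u.count 0) (u.count 1) (u.count 2) p q r := by
  induction u with
  | nil => exact ⟨0, 0, 0, by rw [parikh_nil, uni_one]; norm_num⟩
  | cons h t ih =>
    obtain ⟨p, q, r, hu⟩ := ih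
    rw [parikh_cons, hu]
    fin_cases h <;> simp only [fin3_0, fin3_1, fin3_2]
    · exact ⟨p + t.count 1, q, r + q, by
        rw [letter0, uni_mul]
        congr 1 <;> push_cast [List.count_cons] <;> simp <;> ring⟩
    · exact ⟨p, q + t.count 2, r, by
        rw [letter1, uni_mul]
        congr 1 <;> push_cast [List.count_cons] <;> simp <;> ring⟩
    · exact ⟨p, q, r, by
        rw [letter2, uni_mul]
        congr 1 <;> push_cast [List.count_cons] <;> simp <;> ring⟩

abbrev M4 := Matrix (Fin 4) (Fin 4) ℚ

def psum (u : List (Fin 3)) (B : M4) : M4 :=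
  ∑ i ∈ Finset.range u.length, parikhMatrix (u.drop i) * B * parikhMatrix (u.take i)

lemma psum_append (u v : List (Fin 3)) (B : M4) :
    psum (u ++ v) B = psum u (parikhMatrix v * B) + psum v (B * parikhMatrix u) := by
  unfold psum
  rw [List.length_append, Finset.sum_range_add]
  congr 1
  · apply Finset.sum_congr rfl
    intro i hi
    have hi' : i ≤ u.length := (Finset.mem_range.mp hi).le
    rw [List.drop_append_of_le_length hi', List.take_append_of_le_length hi',
      parikh_append]
    noncomm_ring
  · apply Finset.sum_congr rfl
    intro j _
    rw [List.drop_length_add_append, List.take_length_add_append, parikh_append]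
    noncomm_ring

lemma psum_rot (w : List (Fin 3)) :
    psum w 1 = ∑ i ∈ Finset.range w.length, parikhMatrix (w.rotate i) := by
  unfold psum
  apply Finset.sum_congr rfl
  intro i hi
  rw [List.rotate_eq_drop_append_take (Finset.mem_range.mp hi).le, parikh_append, mul_one]

lemma conjClass_eq_image {α : Type*} [DecidableEq α] (w : List α) (hw : w ≠ []) :
    conjClass w = (Finset.range w.length).image w.rotate := by
  unfold conjClass
  refine Finset.insert_eq_self.mpr (Finset.mem_image.mpr ⟨0, ?_, w.rotate_zero⟩)
  exact Finset.mem_range.mpr (List.length_pos_iff.mpr hw)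

lemma fiber_card {α : Type*} [DecidableEq α] (w : List α) (j : ℕ) (hj : j < w.length) :
    ((Finset.range w.length).filter (fun i => w.rotate i = w.rotate j)).card =
    ((Finset.range w.length).filter (fun i => w.rotate i = w)).card := by
  set n := w.length with hn
  have hn0 : 0 < n := lt_of_le_of_lt (Nat.zero_le j) hj
  apply Finset.card_bij (fun i _ => (i + (n - j)) % n)
  · intro i hi
    simp only [Finset.mem_filter, Finset.mem_range] at hi ⊢
    refine ⟨Nat.mod_lt _ hn0, ?_⟩
    rw [List.rotate_mod, ← List.rotate_rotate, hi.2, List.rotate_rotate]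
    have : j + (n - j) = n := by omega
    rw [this, hn, List.rotate_length]
  · intro i1 h1 i2 h2 heq
    simp only [Finset.mem_filter, Finset.mem_range] at h1 h2
    have hm : i1 ≡ i2 [MOD n] := Nat.ModEq.add_right_cancel' (n - j) heq
    have : i1 % n = i2 % n := hm
    rwa [Nat.mod_eq_of_lt h1.1, Nat.mod_eq_of_lt h2.1] at this
  · intro i' hi'
    simp only [Finset.mem_filter, Finset.mem_range] at hi'
    refine ⟨(i' + j) % n, Finset.mem_filter.mpr ⟨Finset.mem_range.mpr (Nat.mod_lt _ hn0), ?_⟩, ?_⟩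
    · rw [List.rotate_mod, ← List.rotate_rotate, hi'.2]
    · rw [Nat.mod_add_mod]
      have : i' + j + (n - j) = i' + n := by omega
      rw [this, Nat.add_mod_right, Nat.mod_eq_of_lt hi'.1]

lemma circParikh_avg (w : List (Fin 3)) (hw : w ≠ []) :
    circParikh w =
      ((w.length : ℚ))⁻¹ • ∑ i ∈ Finset.range w.length, parikhMatrix (w.rotate i) := by
  set n := w.length with hn
  have hn0 : 0 < n := List.length_pos_iff.mpr hw
  have hmaps : ∀ i ∈ Finset.range n, w.rotate i ∈ conjClass w := by
    intro i hi
    rw [conjClass_eq_image w hw]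
    exact Finset.mem_image_of_mem _ hi
  set c := ((Finset.range n).filter (fun i => w.rotate i = w)).card with hc
  have hc0 : 0 < c := by
    apply Finset.card_pos.mpr
    exact ⟨0, Finset.mem_filter.mpr ⟨Finset.mem_range.mpr hn0, w.rotate_zero⟩⟩
  have hfib : ∀ u ∈ conjClass w,
      ((Finset.range n).filter (fun i => w.rotate i = u)).card = c := by
    intro u hu
    rw [conjClass_eq_image w hw] at hu
    obtain ⟨j, hj, rfl⟩ := Finset.mem_image.mp hu
    exact fiber_card w j (Finset.mem_range.mp hj)
  have hcard : n = (conjClass w).card * c := by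
    have := Finset.card_eq_sum_card_fiberwise hmaps
    rw [Finset.card_range] at this
    rw [this, Finset.sum_congr rfl hfib, Finset.sum_const, smul_eq_mul]
  have hsum : ∑ i ∈ Finset.range n, parikhMatrix (w.rotate i)
      = c • ∑ u ∈ conjClass w, parikhMatrix u := by
    rw [← Finset.sum_fiberwise_of_maps_to hmaps (fun i => parikhMatrix (w.rotate i)),
      Finset.smul_sum]
    apply Finset.sum_congr rfl
    intro u hu
    rw [← hfib u hu, ← Finset.sum_const]
    apply Finset.sum_congr rfl
    intro i hi
    rw [(Finset.mem_filter.mp hi).2]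
  rw [circParikh, hsum, ← Nat.cast_smul_eq_nsmul ℚ, smul_smul]
  congr 1
  have hd0 : 0 < (conjClass w).card := by
    apply Finset.card_pos.mpr
    exact ⟨w.rotate 0, hmaps 0 (Finset.mem_range.mpr hn0)⟩
  have hd : ((conjClass w).card : ℚ) ≠ 0 := Nat.cast_ne_zero.mpr hd0.ne'
  have hcc : (c : ℚ) ≠ 0 := Nat.cast_ne_zero.mpr hc0.ne'
  rw [hcard]
  push_cast
  field_simp

lemma m02 : parikhMatrix [(0 : Fin 3), 2] = uni 1 0 1 0 0 0 := by
  simp [parikhMatrix, letter0, letter2, uni_mul]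

lemma m20 : parikhMatrix [(2 : Fin 3), 0] = uni 1 0 1 0 0 0 := by
  simp [parikhMatrix, letter0, letter2, uni_mul]

lemma psum02 (B : M4) :
    psum [(0 : Fin 3), 2] B = uni 1 0 1 0 0 0 * B + uni 0 0 1 0 0 0 * B * uni 1 0 0 0 0 0 := by
  unfold psum
  rw [show ([(0 : Fin 3), 2]).length = 2 from rfl, Finset.sum_range_succ, Finset.sum_range_one]
  have h1 : parikhMatrix (([(0 : Fin 3), 2]).drop 0) = uni 1 0 1 0 0 0 := m02
  have h2 : parikhMatrix (([(0 : Fin 3), 2]).take 0) = 1 := rfl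
  have h3 : parikhMatrix (([(0 : Fin 3), 2]).drop 1) = uni 0 0 1 0 0 0 := by
    simp [parikhMatrix, letter2]
  have h4 : parikhMatrix (([(0 : Fin 3), 2]).take 1) = uni 1 0 0 0 0 0 := by
    simp [parikhMatrix, letter0]
  rw [h1, h2, h3, h4, mul_one]

lemma psum20 (B : M4) :
    psum [(2 : Fin 3), 0] B = uni 1 0 1 0 0 0 * B + uni 1 0 0 0 0 0 * B * uni 0 0 1 0 0 0 := by
  unfold psum
  rw [show ([(2 : Fin 3), 0]).length = 2 from rfl, Finset.sum_range_succ, Finset.sum_range_one]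
  have h1 : parikhMatrix (([(2 : Fin 3), 0]).drop 0) = uni 1 0 1 0 0 0 := m20
  have h2 : parikhMatrix (([(2 : Fin 3), 0]).take 0) = 1 := rfl
  have h3 : parikhMatrix (([(2 : Fin 3), 0]).drop 1) = uni 1 0 0 0 0 0 := by
    simp [parikhMatrix, letter0]
  have h4 : parikhMatrix (([(2 : Fin 3), 0]).take 1) = uni 0 0 1 0 0 0 := by
    simp [parikhMatrix, letter2]
  rw [h1, h2, h3, h4, mul_one]

set_option maxHeartbeats 2000000 in
lemma key_s16 (x0 x1 x2 p q r y0 y1 y2 p' q' r' : ℚ) (P Q : Matrix (Fin 4) (Fin 4) ℚ) :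
    P + (uni 1 0 1 0 0 0 *
            (uni y0 y1 y2 p' q' r' * uni 1 0 1 0 0 0 * uni x0 x1 x2 p q r) +
          uni 0 0 1 0 0 0 *
              (uni y0 y1 y2 p' q' r' * uni 1 0 1 0 0 0 * uni x0 x1 x2 p q r) *
            uni 1 0 0 0 0 0) + Q +
        (uni 1 0 1 0 0 0 *
            (uni x0 x1 x2 p q r * uni 1 0 1 0 0 0 * uni y0 y1 y2 p' q' r') +
          uni 1 0 0 0 0 0 *
              (uni x0 x1 x2 p q r * uni 1 0 1 0 0 0 * uni y0 y1 y2 p' q' r') *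
            uni 0 0 1 0 0 0) =
      P + (uni 1 0 1 0 0 0 *
            (uni y0 y1 y2 p' q' r' * uni 1 0 1 0 0 0 * uni x0 x1 x2 p q r) +
          uni 1 0 0 0 0 0 *
              (uni y0 y1 y2 p' q' r' * uni 1 0 1 0 0 0 * uni x0 x1 x2 p q r) *
            uni 0 0 1 0 0 0) + Q +
        (uni 1 0 1 0 0 0 *
            (uni x0 x1 x2 p q r * uni 1 0 1 0 0 0 * uni y0 y1 y2 p' q' r') +
          uni 0 0 1 0 0 0 *
              (uni x0 x1 x2 p q r * uni 1 0 1 0 0 0 * uni y0 y1 y2 p' q' r') *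
            uni 1 0 0 0 0 0) ↔
      y1 * (x0 - x2) = x1 * (y0 - y2) := by
  simp only [uni_mul]
  constructor
  · intro h
    have h03 := congrFun (congrFun h 0) 3
    simp [uni, Matrix.add_apply, Matrix.vecHead, Matrix.vecTail] at h03
    linear_combination h03
  · intro h
    have rearr : ∀ (A B C D : Matrix (Fin 4) (Fin 4) ℚ), A + B = C + D →
        P + A + Q + B = P + C + Q + D := by
      intro A B C D hABCD
      calc P + A + Q + B = P + Q + (A + B) := by abel
        _ = P + Q + (C + D) := by rw [hABCD]
        _ = P + C + Q + D := by abel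
    apply rearr
    ext i j
    fin_cases i <;> fin_cases j <;>
      simp [uni, Matrix.add_apply, Matrix.vecHead, Matrix.vecTail] <;>
      first
        | ring1
        | linear_combination h
        | linear_combination -h

/-- Theorem 33: over `{a < b < c} = Fin 3` (with `a = 0`, `b = 1`, `c = 2`), if `w = xacyca`
and `w' = xcayac`, then `[w] ≡_M [w']` iff `|y|_b(|x|_a − |x|_c) = |x|_b(|y|_a − |y|_c)`. -/
theorem stmt_16 (x y : List (Fin 3)) :
    circParikh (x ++ [0, 2] ++ y ++ [2, 0]) = circParikh (x ++ [2, 0] ++ y ++ [0, 2]) ↔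
      (y.count 1 : ℤ) * ((x.count 0 : ℤ) - (x.count 2 : ℤ)) =
        (x.count 1 : ℤ) * ((y.count 0 : ℤ) - (y.count 2 : ℤ)) := by
  set w := x ++ [(0 : Fin 3), 2] ++ y ++ [2, 0] with hwdef
  set w' := x ++ [(2 : Fin 3), 0] ++ y ++ [0, 2] with hwdef'
  have hw : w ≠ [] := by simp [hwdef]
  have hw' : w' ≠ [] := by simp [hwdef']
  have hlen : w.length = w'.length := by simp [hwdef, hwdef']
  have step1 : (circParikh w = circParikh w') ↔ psum w 1 = psum w' 1 := by
    rw [circParikh_avg w hw, circParikh_avg w' hw', ← psum_rot, ← psum_rot, hlen]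
    constructor
    · intro h
      have hN : ((w'.length : ℚ))⁻¹ ≠ 0 :=
        inv_ne_zero (Nat.cast_ne_zero.mpr (List.length_pos_iff.mpr hw').ne')
      exact smul_right_injective M4 hN h
    · intro h; rw [h]
  rw [step1, hwdef, hwdef']
  simp only [psum_append, parikh_append, m02, m20, one_mul, mul_one, psum02, psum20]
  obtain ⟨p, q, r, hX⟩ := parikh_uni x
  obtain ⟨p', q', r', hY⟩ := parikh_uni y
  rw [hX, hY, key_s16]
  constructor <;> intro h <;> exact_mod_cast h
end
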